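/- arXiv:1105.4237 — 3 statements merged into one kernel-verified Lean document; each statement's English description precedes it below -/
import Mathlib

section
/- Let E₂ ⊇ E₃ be the subspaces of F_q^{n₁+n₂+n₃} spanned by the last n₂+n₃ and the last n₃ standard basis vectors respectively. The number of subspaces P of F_q^{n₁+n₂+n₃} with dim P = k₁, dim(P ∩ E₂) = k₂, and dim(P ∩ E₃) = k₃ equals [n₃ choose k₃]_q · q^{(k₂−k₃)(n₃−k₃)} · [n₂ choose k₂−k₃]_q · q^{(k₁−k₂)(n₂+n₃−k₂)} · [n₁ choose k₁−k₂]_q, provided 0 ≤ k₁−k₂ ≤ n₁, 0 ≤ k₂−k₃ ≤ n₂, and 0 ≤ k₃ ≤ n₃. -/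
open Module Submodule

/-- Gaussian binomial coefficient, via the q-Pascal recursion. -/
def gaussBinom (q : ℕ) : ℕ → ℕ → ℕ
  | _, 0 => 1
  | 0, _ + 1 => 0
  | m + 1, i + 1 => gaussBinom q m i + q ^ (i + 1) * gaussBinom q m (i + 1)

lemma gauss_zero (q m : ℕ) : gaussBinom q m 0 = 1 := by cases m <;> rfl
lemma gauss_zero_left (q i : ℕ) : gaussBinom q 0 (i+1) = 0 := rfl
lemma gauss_succ (q m i : ℕ) :
    gaussBinom q (m+1) (i+1) = gaussBinom q m i + q^(i+1) * gaussBinom q m (i+1) := rfl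

section Vspan

variable (F : Type) [Field F]

/-- span of the standard basis vectors indexed by `s`. -/
def Vspan {N : ℕ} (s : Set (Fin N)) : Submodule F (Fin N → F) :=
  Submodule.span F {v | ∃ j ∈ s, v = Pi.single j 1}

lemma lastSpan_eq (N c : ℕ) :
    Submodule.span F {v : Fin N → F | ∃ j : Fin N, c ≤ (j : ℕ) ∧ v = Pi.single j 1}
      = Vspan F {j : Fin N | c ≤ (j : ℕ)} := rfl

variable {F}

lemma mem_Vspan {N : ℕ} (s : Set (Fin N)) (v : Fin N → F) :
    v ∈ Vspan F s ↔ ∀ j ∉ s, v j = 0 := by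
  constructor
  · intro hv
    have : Vspan F s ≤
        { carrier := {v : Fin N → F | ∀ j ∉ s, v j = 0}
          add_mem' := by intro a b ha hb j hj; simp [ha j hj, hb j hj]
          zero_mem' := by intro j hj; rfl
          smul_mem' := by intro c a ha j hj; simp [ha j hj] } := by
      rw [Vspan, Submodule.span_le]
      rintro v ⟨j, hj, rfl⟩ i hi
      have : i ≠ j := by rintro rfl; exact hi hj
      simp [Pi.single_eq_of_ne this]
    exact this hv
  · intro hv
    have hv' : v = ∑ j : Fin N, Pi.single j (v j) := (Finset.univ_sum_single v).symm
    rw [hv']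
    refine Submodule.sum_mem _ fun j _ => ?_
    by_cases hj : j ∈ s
    · have hmem : (Pi.single j (1:F) : Fin N → F) ∈ Vspan F s :=
        Submodule.subset_span ⟨j, hj, rfl⟩
      have h2 := Submodule.smul_mem (Vspan F s) (v j) hmem
      have h3 : v j • (Pi.single j (1:F) : Fin N → F) = Pi.single j (v j) := by
        rw [← Pi.single_smul, smul_eq_mul, mul_one]
      rwa [h3] at h2
    · rw [hv j hj, Pi.single_zero]; exact Submodule.zero_mem _

lemma Vspan_inf {N : ℕ} (s t : Set (Fin N)) : Vspan F s ⊓ Vspan F t = Vspan F (s ∩ t) := by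
  ext v
  simp only [Submodule.mem_inf, mem_Vspan]
  constructor
  · rintro ⟨h1, h2⟩ j hj
    rcases (by tauto : j ∉ s ∨ j ∉ t) with h | h
    · exact h1 j h
    · exact h2 j h
  · intro h
    exact ⟨fun j hj => h j (fun hj' => hj hj'.1), fun j hj => h j (fun hj' => hj hj'.2)⟩

lemma Vspan_sup {N : ℕ} (s t : Set (Fin N)) : Vspan F s ⊔ Vspan F t = Vspan F (s ∪ t) := by
  rw [Vspan, Vspan, Vspan, ← Submodule.span_union]
  congr 1
  ext v
  constructor
  · rintro (⟨j, hj, rfl⟩ | ⟨j, hj, rfl⟩)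
    · exact ⟨j, Or.inl hj, rfl⟩
    · exact ⟨j, Or.inr hj, rfl⟩
  · rintro ⟨j, hj | hj, rfl⟩
    · exact Or.inl ⟨j, hj, rfl⟩
    · exact Or.inr ⟨j, hj, rfl⟩

lemma Vspan_empty {N : ℕ} : Vspan F (∅ : Set (Fin N)) = ⊥ := by
  ext v
  simp only [mem_Vspan, Submodule.mem_bot]
  constructor
  · intro h; funext j; exact h j (by simp)
  · rintro rfl j _; rfl

lemma Vspan_univ {N : ℕ} : Vspan F (Set.univ : Set (Fin N)) = ⊤ := by
  ext v
  simp [mem_Vspan]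

lemma isCompl_Vspan {N : ℕ} (s : Set (Fin N)) : IsCompl (Vspan F sᶜ) (Vspan F s) := by
  constructor
  · rw [disjoint_iff, Vspan_inf]
    simp [Vspan_empty]
  · rw [codisjoint_iff, Vspan_sup]
    simp [Vspan_univ]

/-- interval equivalence -/
def intervalEquiv (a b N : ℕ) (hb : b ≤ N) :
    {j : Fin N // a ≤ (j : ℕ) ∧ (j : ℕ) < b} ≃ Fin (b - a) where
  toFun j := ⟨(j : ℕ) - a, by omega⟩
  invFun i := ⟨⟨a + (i : ℕ), by omega⟩, by constructor <;> simp <;> omega⟩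
  left_inv j := by
    have h1 := j.2.1
    apply Subtype.ext; apply Fin.ext
    simp only [Fin.val_mk]
    omega
  right_inv i := by
    apply Fin.ext
    simp only [Fin.val_mk]
    omega

lemma finrank_Vspan {N : ℕ} (s : Set (Fin N)) [DecidablePred (· ∈ s)] :
    finrank F (Vspan F s) = Fintype.card {j : Fin N // j ∈ s} := by
  have hli : LinearIndependent F (fun j : {j : Fin N // j ∈ s} => (Pi.single (j : Fin N) (1:F) : Fin N → F)) := by
    have h := ((Pi.basisFun F (Fin N)).linearIndependent).comp
      (fun j : {j : Fin N // j ∈ s} => (j : Fin N)) Subtype.coe_injective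
    have he : (fun j : {j : Fin N // j ∈ s} => (Pi.single (j : Fin N) (1:F) : Fin N → F))
        = (Pi.basisFun F (Fin N)) ∘ (fun j : {j : Fin N // j ∈ s} => (j : Fin N)) := by
      funext j
      simp [Pi.basisFun_apply]
    rw [he]
    exact h
  have hset : {v : Fin N → F | ∃ j ∈ s, v = Pi.single j 1}
      = Set.range (fun j : {j : Fin N // j ∈ s} => (Pi.single (j : Fin N) (1:F) : Fin N → F)) := by
    ext v
    constructor
    · rintro ⟨j, hj, rfl⟩; exact ⟨⟨j, hj⟩, rfl⟩
    · rintro ⟨⟨j, hj⟩, rfl⟩; exact ⟨j, hj, rfl⟩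
  rw [Vspan, hset, finrank_span_eq_card hli]

end Vspan
/-- The subspace of `F^N` spanned by the standard basis vectors `e_j` with `c ≤ j`
(0-indexed), i.e. by the last `N - c` standard basis vectors. -/
def lastSpan (F : Type) [Field F] (N c : ℕ) : Submodule F (Fin N → F) :=
  Submodule.span F {v | ∃ j : Fin N, c ≤ (j : ℕ) ∧ v = Pi.single j 1}
section LemmaA

variable {F : Type} [Field F] {V : Type} [AddCommGroup V] [Module F V]

/-- The submodule built from a subspace `S` of a complement of `W` and a linear map
`f : S → W ⧸ Q`. -/
noncomputable def mkP (W Q S : Submodule F V) (f : S →ₗ[F] (W ⧸ Q.comap W.subtype)) :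
    Submodule F V :=
  Submodule.map (S.subtype.coprod W.subtype)
    (LinearMap.ker ((f ∘ₗ LinearMap.fst F S W) -
      ((Q.comap W.subtype).mkQ ∘ₗ LinearMap.snd F S W)))

lemma mem_mkP {W Q S : Submodule F V} {f : S →ₗ[F] (W ⧸ Q.comap W.subtype)} {v : V} :
    v ∈ mkP W Q S f ↔
      ∃ (s : S) (w : W), f s = Submodule.Quotient.mk w ∧ (s : V) + w = v := by
  constructor
  · rintro ⟨⟨s, w⟩, hker, rfl⟩
    simp only [SetLike.mem_coe, LinearMap.mem_ker, LinearMap.sub_apply, sub_eq_zero] at hker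
    exact ⟨s, w, hker, rfl⟩
  · rintro ⟨s, w, hf, rfl⟩
    refine ⟨⟨s, w⟩, ?_, rfl⟩
    simp only [SetLike.mem_coe, LinearMap.mem_ker, LinearMap.sub_apply, sub_eq_zero]
    exact hf

variable [FiniteDimensional F V]

lemma coprod_injective {W S : Submodule F V} (hd : Disjoint S W) :
    Function.Injective (S.subtype.coprod W.subtype) := by
  rw [← LinearMap.ker_eq_bot]
  rw [Submodule.eq_bot_iff]
  rintro ⟨s, w⟩ h
  rw [LinearMap.mem_ker, LinearMap.coprod_apply] at h
  simp only [Submodule.coe_subtype] at h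
  have hs : (s : V) ∈ S ⊓ W := by
    constructor
    · exact s.2
    · have : (s : V) = -(w : V) := eq_neg_of_add_eq_zero_left h
      rw [this]
      exact neg_mem w.2
  rw [disjoint_iff] at hd
  rw [hd, Submodule.mem_bot] at hs
  have hw : (w : V) = 0 := by
    rw [hs, zero_add] at h
    exact h
  ext
  · exact hs
  · exact hw

lemma finrank_comap_subtype_of_le {W Q : Submodule F V} (hQW : Q ≤ W) :
    finrank F (Q.comap W.subtype) = finrank F Q := by
  have h1 : Submodule.map W.subtype (Q.comap W.subtype) = Q := by
    rw [Submodule.map_comap_subtype, inf_eq_right.mpr hQW]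
  rw [← Submodule.finrank_map_subtype_eq W (Q.comap W.subtype), h1]

lemma finrank_mkP {W Q S : Submodule F V} (hQW : Q ≤ W) (hd : Disjoint S W)
    (f : S →ₗ[F] (W ⧸ Q.comap W.subtype)) :
    finrank F (mkP W Q S f) = finrank F S + finrank F Q := by
  set ψ := (f ∘ₗ LinearMap.fst F S W) -
      ((Q.comap W.subtype).mkQ ∘ₗ LinearMap.snd F S W) with hψ
  have hsurj : LinearMap.range ψ = ⊤ := by
    rw [LinearMap.range_eq_top]
    intro y
    obtain ⟨w, rfl⟩ := Submodule.Quotient.mk_surjective _ y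
    refine ⟨(0, -w), ?_⟩
    simp [hψ]
  have h1 : finrank F (mkP W Q S f) = finrank F (LinearMap.ker ψ) := by
    rw [mkP]
    exact (Submodule.equivMapOfInjective _ (coprod_injective hd) _).symm.finrank_eq
  have h2 := LinearMap.finrank_range_add_finrank_ker ψ
  rw [hsurj] at h2
  have h3 : finrank F (⊤ : Submodule F (W ⧸ Q.comap W.subtype))
      = finrank F (W ⧸ Q.comap W.subtype) := finrank_top F _
  have h4 := Submodule.finrank_quotient_add_finrank (Q.comap W.subtype)
  have h5 : finrank F (Q.comap W.subtype) = finrank F Q := finrank_comap_subtype_of_le hQW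
  have h6 : finrank F (S × W) = finrank F S + finrank F W := Module.finrank_prod
  omega

lemma mkP_inf {W Q S : Submodule F V} (hQW : Q ≤ W) (hd : Disjoint S W)
    (f : S →ₗ[F] (W ⧸ Q.comap W.subtype)) :
    mkP W Q S f ⊓ W = Q := by
  ext v
  simp only [Submodule.mem_inf, mem_mkP]
  constructor
  · rintro ⟨⟨s, w, hf, rfl⟩, hvW⟩
    have hs : (s : V) ∈ S ⊓ W := by
      refine ⟨s.2, ?_⟩
      have : (s : V) = ((s : V) + w) - w := (add_sub_cancel_right _ _).symm
      rw [this]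
      exact sub_mem hvW w.2
    rw [disjoint_iff] at hd
    rw [hd, Submodule.mem_bot] at hs
    have hs0 : s = 0 := Subtype.ext hs
    rw [hs0, map_zero] at hf
    have hw : w ∈ Q.comap W.subtype := by
      rwa [eq_comm, Submodule.Quotient.mk_eq_zero] at hf
    rw [hs, zero_add]
    exact hw
  · intro hv
    refine ⟨⟨0, ⟨v, hQW hv⟩, ?_, by simp⟩, hQW hv⟩
    rw [map_zero, eq_comm, Submodule.Quotient.mk_eq_zero]
    exact hv

end LemmaA
section LemmaABij

variable {F : Type} [Field F] {V : Type} [AddCommGroup V] [Module F V]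
variable [FiniteDimensional F V]

/-- The parametrization map for subspaces `P` with `P ⊓ W = Q`. -/
noncomputable def PsiMap (A W Q : Submodule F V) (h : IsCompl A W) (hQW : Q ≤ W)
    {k j : ℕ} (hQj : finrank F Q = j) (hjk : j ≤ k)
    (x : Σ S : {S : Submodule F V // S ≤ A ∧ finrank F S = k - j},
      (S.1 →ₗ[F] (W ⧸ Q.comap W.subtype))) :
    {P : Submodule F V // finrank F P = k ∧ P ⊓ W = Q} :=
  ⟨mkP W Q x.1.1 x.2, by
    have hd : Disjoint x.1.1 W := h.disjoint.mono_left x.1.2.1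
    rw [finrank_mkP hQW hd, x.1.2.2, hQj]
    omega,
   mkP_inf hQW (h.disjoint.mono_left x.1.2.1) x.2⟩

lemma mkP_proj (A W Q : Submodule F V) (h : IsCompl A W) {S : Submodule F V}
    (hSA : S ≤ A) (f : S →ₗ[F] (W ⧸ Q.comap W.subtype)) :
    Submodule.map (A.subtype ∘ₗ A.projectionOnto W h) (mkP W Q S f) = S := by
  ext v
  simp only [Submodule.mem_map]
  constructor
  · rintro ⟨u, hu, rfl⟩
    rw [mem_mkP] at hu
    obtain ⟨s, w, hf, rfl⟩ := hu
    have h1 : A.projectionOnto W h ((s : V) + w) = ⟨(s : V), hSA s.2⟩ := by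
      rw [map_add, Submodule.projectionOnto_apply_left h ⟨(s : V), hSA s.2⟩,
        Submodule.projectionOnto_apply_of_mem_right h w.2, add_zero]
    simp only [LinearMap.comp_apply, h1, Submodule.coe_subtype]
    exact s.2
  · intro hv
    obtain ⟨w, hw⟩ := Submodule.Quotient.mk_surjective (Q.comap W.subtype) (f ⟨v, hv⟩)
    refine ⟨v + w, ?_, ?_⟩
    · rw [mem_mkP]
      exact ⟨⟨v, hv⟩, w, hw.symm, rfl⟩
    · have h1 : A.projectionOnto W h ((v : V) + w) = ⟨v, hSA hv⟩ := by
        rw [map_add, Submodule.projectionOnto_apply_left h ⟨v, hSA hv⟩,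
          Submodule.projectionOnto_apply_of_mem_right h w.2, add_zero]
      simp only [LinearMap.comp_apply, h1, Submodule.coe_subtype]

lemma PsiMap_injective (A W Q : Submodule F V) (h : IsCompl A W) (hQW : Q ≤ W)
    {k j : ℕ} (hQj : finrank F Q = j) (hjk : j ≤ k) :
    Function.Injective (PsiMap A W Q h hQW hQj hjk) := by
  rintro ⟨⟨S, hS⟩, f⟩ ⟨⟨S', hS'⟩, f'⟩ heq
  have hP : mkP W Q S f = mkP W Q S' f' := congrArg Subtype.val heq
  have hSS : S = S' := by
    rw [← mkP_proj A W Q h hS.1 f, hP, mkP_proj A W Q h hS'.1 f']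
  subst hSS
  have hff : f = f' := by
    ext s
    obtain ⟨w, hw⟩ := Submodule.Quotient.mk_surjective (Q.comap W.subtype) (f s)
    have hmem : ((s : V) + w) ∈ mkP W Q S f' := by
      rw [← hP, mem_mkP]
      exact ⟨s, w, hw.symm, rfl⟩
    rw [mem_mkP] at hmem
    obtain ⟨s', w', hf', hsum⟩ := hmem
    have hsw : (s : V) - s' ∈ S ⊓ W := by
      constructor
      · exact sub_mem s.2 s'.2
      · have h2 : (s : V) - s' = (w' : V) - w := by
          rw [sub_eq_sub_iff_add_eq_add, ← hsum]
          abel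
        rw [h2]
        exact sub_mem w'.2 w.2
    have hd := h.disjoint.mono_left hS.1
    rw [disjoint_iff] at hd
    rw [hd, Submodule.mem_bot, sub_eq_zero] at hsw
    have hs' : s' = s := Subtype.ext hsw.symm
    subst hs'
    have hw' : w' = w := by
      apply Subtype.ext
      have h2 : (s' : V) + w' = (s' : V) + w := hsum
      exact add_left_cancel h2
    subst hw'
    rw [hf', ← hw]
  subst hff
  rfl

lemma PsiMap_surjective (A W Q : Submodule F V) (h : IsCompl A W) (hQW : Q ≤ W)
    {k j : ℕ} (hQj : finrank F Q = j) (hjk : j ≤ k) :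
    Function.Surjective (PsiMap A W Q h hQW hQj hjk) := by
  rintro ⟨P, hPk, hPQ⟩
  have hQP : Q ≤ P := by rw [← hPQ]; exact inf_le_left
  set πA : V →ₗ[F] V := A.subtype ∘ₗ A.projectionOnto W h with hπA
  set S : Submodule F V := P.map πA with hSdef
  have hSA : S ≤ A := by
    rintro v ⟨p, hp, rfl⟩
    exact (A.projectionOnto W h p).2
  -- the restriction of the projection to P, as a map to S
  set e' : ↥P →ₗ[F] V := πA ∘ₗ P.subtype with he'
  have he'mem : ∀ p : ↥P, e' p ∈ S := fun p => ⟨p, p.2, rfl⟩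
  set eS : ↥P →ₗ[F] ↥S := LinearMap.codRestrict S e' he'mem with heS
  have hesurj : Function.Surjective eS := by
    rintro ⟨v, hv⟩
    obtain ⟨p, hp, rfl⟩ := hv
    exact ⟨⟨p, hp⟩, Subtype.ext rfl⟩
  have hker_mem : ∀ p : ↥P, eS p = 0 ↔ (p : V) ∈ W := by
    intro p
    constructor
    · intro hp
      have h1 : e' p = 0 := by
        have := congrArg (Subtype.val) hp
        simpa [heS] using this
      have h2 : A.projectionOnto W h (p : V) = 0 := by
        have h3 : (A.subtype) (A.projectionOnto W h (p : V)) = 0 := h1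
        exact Subtype.ext h3
      rwa [Submodule.projectionOnto_apply_eq_zero_iff] at h2
    · intro hp
      apply Subtype.ext
      show e' p = 0
      show A.subtype (A.projectionOnto W h (p : V)) = 0
      rw [Submodule.projectionOnto_apply_of_mem_right h hp]
      rfl
  set g : ↥P →ₗ[F] (W ⧸ Q.comap W.subtype) :=
    (Q.comap W.subtype).mkQ ∘ₗ ((W.projectionOnto A h.symm) ∘ₗ P.subtype) with hg
  have hker : LinearMap.ker eS ≤ LinearMap.ker g := by
    intro p hp
    rw [LinearMap.mem_ker] at hp ⊢
    have hpW : (p : V) ∈ W := (hker_mem p).mp hp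
    have h1 : W.projectionOnto A h.symm (p : V) = ⟨(p : V), hpW⟩ :=
      Submodule.projectionOnto_apply_left h.symm ⟨(p : V), hpW⟩
    show (Q.comap W.subtype).mkQ (W.projectionOnto A h.symm (p : V)) = 0
    rw [h1, Submodule.mkQ_apply, Submodule.Quotient.mk_eq_zero]
    show (p : V) ∈ Q
    rw [← hPQ]
    exact ⟨p.2, hpW⟩
  set E := LinearMap.quotKerEquivOfSurjective eS hesurj with hE
  set f₀ : ↥S →ₗ[F] (W ⧸ Q.comap W.subtype) :=
    (Submodule.liftQ (LinearMap.ker eS) g hker) ∘ₗ (E.symm : ↥S →ₗ[F] ↥P ⧸ LinearMap.ker eS)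
    with hf₀
  have hkey : ∀ p : ↥P, f₀ (eS p) = g p := by
    intro p
    have h1 : E (Submodule.Quotient.mk p) = eS p := rfl
    have h2 : E.symm (eS p) = Submodule.Quotient.mk p := by
      rw [← h1, LinearEquiv.symm_apply_apply]
    show (Submodule.liftQ (LinearMap.ker eS) g hker) (E.symm (eS p)) = g p
    rw [h2, Submodule.liftQ_apply]
  -- finrank of S
  have hrankS : finrank F S = k - j := by
    have h1 := LinearMap.finrank_range_add_finrank_ker eS
    have h2 : LinearMap.range eS = ⊤ := LinearMap.range_eq_top.mpr hesurj
    rw [h2] at h1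
    have h3 : finrank F (⊤ : Submodule F ↥S) = finrank F ↥S := finrank_top F _
    have h4 : LinearMap.ker eS = Q.comap P.subtype := by
      ext p
      rw [LinearMap.mem_ker, hker_mem p, Submodule.mem_comap]
      constructor
      · intro hpW
        show (p : V) ∈ Q
        rw [← hPQ]; exact ⟨p.2, hpW⟩
      · intro hpQ
        exact hQW hpQ
    have h5 : finrank F (Q.comap P.subtype) = finrank F Q := finrank_comap_subtype_of_le hQP
    rw [h3, h4, h5, hQj, hPk] at h1
    omega
  refine ⟨⟨⟨S, hSA, hrankS⟩, f₀⟩, ?_⟩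
  apply Subtype.ext
  show mkP W Q S f₀ = P
  ext v
  rw [mem_mkP]
  constructor
  · rintro ⟨s, w, hf, rfl⟩
    obtain ⟨p, hp, hps⟩ := s.2
    have heSp : eS ⟨p, hp⟩ = s := Subtype.ext hps
    have hfs : f₀ s = Submodule.Quotient.mk (W.projectionOnto A h.symm p) := by
      rw [← heSp, hkey]
      rfl
    rw [hfs] at hf
    have hdiff : (w : V) - (W.projectionOnto A h.symm p : V) ∈ Q := by
      have := (Submodule.Quotient.eq (Q.comap W.subtype)).mp hf.symm
      exact this
    have hdecomp : (A.projectionOnto W h p : V)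
        + (W.projectionOnto A h.symm p : V) = p :=
      Submodule.projection_add_projection_eq_self h p
    have hsv : (s : V) = (A.projectionOnto W h p : V) := hps.symm
    have hcalc : (s : V) + w = p + ((w : V) - (W.projectionOnto A h.symm p : V)) :=
      calc (s : V) + w = (A.projectionOnto W h p : V) + w := by rw [hsv]
        _ = ((A.projectionOnto W h p : V) + (W.projectionOnto A h.symm p : V))
            + ((w : V) - (W.projectionOnto A h.symm p : V)) := by abel
        _ = p + ((w : V) - (W.projectionOnto A h.symm p : V)) := by rw [hdecomp]
    rw [hcalc]
    exact add_mem hp (hQP hdiff)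
  · intro hv
    set pp : ↥P := ⟨v, hv⟩ with hpp
    refine ⟨eS pp, W.projectionOnto A h.symm v, ?_, ?_⟩
    · rw [hkey]
      rfl
    · show (e' pp) + (W.projectionOnto A h.symm v : V) = v
      exact Submodule.projection_add_projection_eq_self h v

end LemmaABij
section Counting

variable {F : Type} [Field F] [Fintype F] {V : Type} [AddCommGroup V] [Module F V]
variable [FiniteDimensional F V]

lemma finite_submodule (F V : Type) [Field F] [Fintype F] [AddCommGroup V] [Module F V]
    [FiniteDimensional F V] : Finite (Submodule F V) := by
  have : Finite V := Module.finite_of_finite F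
  exact Finite.of_injective (fun p => (p : Set V)) SetLike.coe_injective

lemma card_linearMap (M N : Type) [AddCommGroup M] [Module F M] [FiniteDimensional F M]
    [AddCommGroup N] [Module F N] [FiniteDimensional F N] :
    Nat.card (M →ₗ[F] N) = Fintype.card F ^ (finrank F M * finrank F N) := by
  have hfin : Finite (M →ₗ[F] N) := Module.finite_of_finite F
  letI : Fintype (M →ₗ[F] N) := Fintype.ofFinite _
  rw [Nat.card_eq_fintype_card, card_eq_pow_finrank (K := F), Module.finrank_linearMap]

lemma card_split {α : Type*} [Finite α] (p r : α → Prop) :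
    Nat.card {a // p a} = Nat.card {a // p a ∧ r a} + Nat.card {a // p a ∧ ¬ r a} := by
  classical
  rw [← Nat.card_sum]
  apply Nat.card_congr
  exact ((Equiv.sumCompl (fun x : {a // p a} => r x.1)).symm.trans
    (Equiv.sumCongr (Equiv.subtypeSubtypeEquivSubtypeInter p r)
      (Equiv.subtypeSubtypeEquivSubtypeInter p (fun a => ¬ r a))))

/-- Lemma A: counting subspaces with prescribed intersection with `W`. -/
lemma cardA (A W Q : Submodule F V) (h : IsCompl A W) (hQW : Q ≤ W)
    {k j : ℕ} (hQj : finrank F Q = j) (hjk : j ≤ k) :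
    Nat.card {P : Submodule F V // finrank F P = k ∧ P ⊓ W = Q}
      = Fintype.card F ^ ((k - j) * (finrank F W - j)) *
        Nat.card {S : Submodule F V // S ≤ A ∧ finrank F S = k - j} := by
  haveI : Finite (Submodule F V) := finite_submodule F V
  have hbij := Nat.card_eq_of_bijective _
    ⟨PsiMap_injective A W Q h hQW hQj hjk, PsiMap_surjective A W Q h hQW hQj hjk⟩
  rw [← hbij]
  letI : Fintype {S : Submodule F V // S ≤ A ∧ finrank F S = k - j} := Fintype.ofFinite _
  letI : ∀ S : {S : Submodule F V // S ≤ A ∧ finrank F S = k - j},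
      Fintype (S.1 →ₗ[F] (W ⧸ Q.comap W.subtype)) := fun S => by
    have : Finite (S.1 →ₗ[F] (W ⧸ Q.comap W.subtype)) := Module.finite_of_finite F
    exact Fintype.ofFinite _
  rw [Nat.card_eq_fintype_card, Fintype.card_sigma]
  have hWQ : finrank F (W ⧸ Q.comap W.subtype) = finrank F W - j := by
    have h4 := Submodule.finrank_quotient_add_finrank (Q.comap W.subtype)
    have h5 : finrank F (Q.comap W.subtype) = j := by
      rw [finrank_comap_subtype_of_le hQW, hQj]
    omega
  have hcard : ∀ S : {S : Submodule F V // S ≤ A ∧ finrank F S = k - j},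
      Fintype.card (S.1 →ₗ[F] (W ⧸ Q.comap W.subtype))
        = Fintype.card F ^ ((k - j) * (finrank F W - j)) := by
    intro S
    rw [← Nat.card_eq_fintype_card, card_linearMap, S.2.2, hWQ]
  rw [Finset.sum_congr rfl (fun S _ => hcard S), Finset.sum_const, smul_eq_mul,
    Finset.card_univ, Nat.card_eq_fintype_card, mul_comm]

lemma card_sub_restrict (A : Submodule F V) (i : ℕ) :
    Nat.card {S : Submodule F V // S ≤ A ∧ finrank F S = i}
      = Nat.card {S : Submodule F A // finrank F S = i} := by
  apply Nat.card_congr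
  refine Equiv.symm ?_
  refine Equiv.trans (Equiv.subtypeEquiv (Submodule.MapSubtype.orderIso A).toEquiv ?_)
    (Equiv.subtypeSubtypeEquivSubtypeInter _ _)
  intro T
  show finrank F T = i ↔ _
  have : ((Submodule.MapSubtype.orderIso A) T : Submodule F V) = Submodule.map A.subtype T := rfl
  rw [show (((Submodule.MapSubtype.orderIso A).toEquiv T : {S : Submodule F V // S ≤ A}) :
    Submodule F V) = Submodule.map A.subtype T from rfl]
  rw [Submodule.finrank_map_subtype_eq]

end Counting
section LemmaB

variable {F : Type} [Field F] [Fintype F]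

lemma card_rank_zero (M : Type) [AddCommGroup M] [Module F M] [FiniteDimensional F M] :
    Nat.card {S : Submodule F M // finrank F S = 0} = 1 := by
  letI : Unique {S : Submodule F M // finrank F S = 0} :=
    { default := ⟨⊥, finrank_bot F M⟩
      uniq := fun S => Subtype.ext (Submodule.finrank_eq_zero.mp S.2) }
  exact Nat.card_unique

lemma card_quot_branch (M : Type) [AddCommGroup M] [Module F M] [FiniteDimensional F M]
    (W : Submodule F M) (i : ℕ) :
    Nat.card {S : Submodule F M // finrank F S = i + finrank F W ∧ W ≤ S}
      = Nat.card {S' : Submodule F (M ⧸ W) // finrank F S' = i} := by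
  apply Nat.card_congr
  refine Equiv.symm ?_
  have key : ∀ S' : Submodule F (M ⧸ W),
      finrank F (Submodule.comap W.mkQ S') = finrank F S' + finrank F W := by
    intro S'
    set P := Submodule.comap W.mkQ S' with hP
    have hWP : W ≤ P := by
      intro x hx
      show W.mkQ x ∈ S'
      have : W.mkQ x = 0 := by
        rw [Submodule.mkQ_apply, Submodule.Quotient.mk_eq_zero]
        exact hx
      rw [this]
      exact Submodule.zero_mem _
    set ee : ↥P →ₗ[F] (M ⧸ W) := W.mkQ ∘ₗ P.subtype with hee
    have hrange : LinearMap.range ee = S' := by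
      rw [hee, LinearMap.range_comp, Submodule.range_subtype, Submodule.map_comap_eq,
        Submodule.range_mkQ, top_inf_eq]
    have hker : LinearMap.ker ee = Submodule.comap P.subtype W := by
      ext p
      rw [LinearMap.mem_ker, Submodule.mem_comap]
      show W.mkQ (p : M) = 0 ↔ _
      rw [Submodule.mkQ_apply, Submodule.Quotient.mk_eq_zero]
      rfl
    have h1 := LinearMap.finrank_range_add_finrank_ker ee
    rw [hrange, hker] at h1
    rw [finrank_comap_subtype_of_le hWP] at h1
    omega
  refine Equiv.trans (Equiv.subtypeEquiv (Submodule.comapMkQRelIso W).toEquiv ?_)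
    (Equiv.trans (Equiv.subtypeSubtypeEquivSubtypeInter _ _)
      (Equiv.subtypeEquivRight fun S => and_comm))
  intro S'
  show finrank F S' = i ↔ finrank F ((Submodule.comapMkQRelIso W) S' : Submodule F M) = i + finrank F W
  rw [show ((Submodule.comapMkQRelIso W) S' : Submodule F M) = Submodule.comap W.mkQ S' from rfl,
    key S']
  omega

lemma not_le_iff_inf_span (M : Type) [AddCommGroup M] [Module F M] {x : M} (hx : x ≠ 0)
    (S : Submodule F M) : (¬ (Submodule.span F {x}) ≤ S) ↔ S ⊓ Submodule.span F {x} = ⊥ := by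
  constructor
  · intro hns
    rw [Submodule.eq_bot_iff]
    rintro v ⟨hvS, hvW⟩
    simp only [SetLike.mem_coe] at hvS hvW
    rw [Submodule.mem_span_singleton] at hvW
    obtain ⟨c, rfl⟩ := hvW
    by_cases hc : c = 0
    · rw [hc, zero_smul]
    · exfalso
      apply hns
      rw [Submodule.span_le, Set.singleton_subset_iff]
      have : x = c⁻¹ • (c • x) := by rw [smul_smul, inv_mul_cancel₀ hc, one_smul]
      rw [this]
      exact Submodule.smul_mem _ _ hvS
  · intro hb hle
    have hxS : x ∈ S ⊓ Submodule.span F {x} :=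
      ⟨hle (Submodule.mem_span_singleton_self x), Submodule.mem_span_singleton_self x⟩
    rw [hb, Submodule.mem_bot] at hxS
    exact hx hxS

lemma countSub : ∀ (n : ℕ) (M : Type) [AddCommGroup M] [Module F M] [FiniteDimensional F M],
    finrank F M = n → ∀ i : ℕ,
    Nat.card {S : Submodule F M // finrank F S = i} = gaussBinom (Fintype.card F) n i := by
  intro n
  induction n with
  | zero =>
    intro M _ _ _ hn i
    cases i with
    | zero => rw [card_rank_zero, gauss_zero]
    | succ i =>
      have : IsEmpty {S : Submodule F M // finrank F S = i + 1} := by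
        constructor
        rintro ⟨S, hS⟩
        have h1 : finrank F S ≤ finrank F M := Submodule.finrank_le S
        omega
      rw [Nat.card_of_isEmpty]
      rfl
  | succ n IH =>
    intro M _ _ _ hn i
    cases i with
    | zero => rw [card_rank_zero, gauss_zero]
    | succ i =>
      have hpos : 0 < finrank F M := by omega
      haveI : Nontrivial M := Module.nontrivial_of_finrank_pos (R := F) hpos
      obtain ⟨x, hx⟩ := exists_ne (0 : M)
      set W : Submodule F M := Submodule.span F {x} with hWdef
      have hWrank : finrank F W = 1 := finrank_span_singleton hx
      obtain ⟨A, hA⟩ := Submodule.exists_isCompl W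
      have hArank : finrank F A = n := by
        have h2 := Submodule.finrank_add_eq_of_isCompl hA
        omega
      haveI : Finite (Submodule F M) := finite_submodule F M
      rw [card_split (fun S : Submodule F M => finrank F S = i + 1) (fun S => W ≤ S)]
      have hb1 : Nat.card {S : Submodule F M // finrank F S = i + 1 ∧ W ≤ S}
          = gaussBinom (Fintype.card F) n i := by
        have heq : ∀ S : Submodule F M, (finrank F S = i + 1 ∧ W ≤ S)
            ↔ (finrank F S = i + finrank F W ∧ W ≤ S) := by
          intro S; rw [hWrank]
        rw [Nat.card_congr (Equiv.subtypeEquivRight heq), card_quot_branch M W i]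
        have hq : finrank F (M ⧸ W) = n := by
          have h3 := Submodule.finrank_quotient_add_finrank W
          omega
        exact IH (M ⧸ W) hq i
      have hb2 : Nat.card {S : Submodule F M // finrank F S = i + 1 ∧ ¬ W ≤ S}
          = Fintype.card F ^ (i + 1) * gaussBinom (Fintype.card F) n (i + 1) := by
        have heq : ∀ S : Submodule F M, (finrank F S = i + 1 ∧ ¬ W ≤ S)
            ↔ (finrank F S = i + 1 ∧ S ⊓ W = ⊥) := by
          intro S
          rw [not_le_iff_inf_span M hx S]
        rw [Nat.card_congr (Equiv.subtypeEquivRight heq)]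
        have h4 := cardA A W ⊥ hA.symm bot_le (finrank_bot F M) (Nat.zero_le (i+1))
        rw [h4, card_sub_restrict, IH A hArank, hWrank]
        simp
      rw [hb1, hb2, gauss_succ]

end LemmaB
section Fiberwise

lemma card_fiber_const {α β : Type} [Finite α] [Finite β]
    (p : α → Prop) (q : β → Prop) (φ : α → β) (hφ : ∀ a, p a → q (φ a))
    (c : ℕ) (hc : ∀ b, q b → Nat.card {a // p a ∧ φ a = b} = c) :
    Nat.card {a // p a} = Nat.card {b // q b} * c := by
  classical
  letI := Fintype.ofFinite α
  letI := Fintype.ofFinite β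
  rw [Nat.card_eq_fintype_card, Nat.card_eq_fintype_card]
  rw [Fintype.card_subtype]
  rw [Finset.card_eq_sum_card_fiberwise (f := φ) (t := Finset.univ.filter q)
    (by intro x hx; simp only [Finset.coe_filter, Finset.mem_coe, Set.mem_setOf_eq, Finset.mem_filter, Finset.mem_univ, true_and] at hx ⊢
        exact hφ x hx)]
  have hterm : ∀ b ∈ Finset.univ.filter q,
      ((Finset.univ.filter p).filter (fun a => φ a = b)).card = c := by
    intro b hb
    rw [Finset.filter_filter]
    have h1 : ((Finset.univ.filter fun a => p a ∧ φ a = b)).card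
        = Fintype.card {a // p a ∧ φ a = b} := (Fintype.card_subtype _).symm
    rw [h1, ← Nat.card_eq_fintype_card,
      hc b (by simpa using (Finset.mem_filter.mp hb).2)]
  rw [Finset.sum_congr rfl hterm, Finset.sum_const, smul_eq_mul, Fintype.card_subtype]

end Fiberwise

section LemmaC

variable {F : Type} [Field F] [Fintype F] {V : Type} [AddCommGroup V] [Module F V]
variable [FiniteDimensional F V]

/-- Counting subspaces of given dimension with intersection with `W` of given dimension. -/
lemma cardC (A W : Submodule F V) (h : IsCompl A W) {k j : ℕ} (hjk : j ≤ k) :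
    Nat.card {P : Submodule F V // finrank F P = k ∧ finrank F ↥(P ⊓ W) = j}
      = gaussBinom (Fintype.card F) (finrank F W) j *
        (Fintype.card F ^ ((k - j) * (finrank F W - j)) *
          gaussBinom (Fintype.card F) (finrank F A) (k - j)) := by
  haveI : Finite (Submodule F V) := finite_submodule F V
  have hmain := card_fiber_const
    (fun P : Submodule F V => finrank F P = k ∧ finrank F ↥(P ⊓ W) = j)
    (fun Q : Submodule F V => Q ≤ W ∧ finrank F Q = j)
    (fun P => P ⊓ W)
    (fun P hP => ⟨inf_le_right, hP.2⟩)
    (Fintype.card F ^ ((k - j) * (finrank F W - j)) *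
      gaussBinom (Fintype.card F) (finrank F A) (k - j))
    (by
      rintro Q ⟨hQW, hQj⟩
      have heq : ∀ P : Submodule F V,
          ((finrank F P = k ∧ finrank F ↥(P ⊓ W) = j) ∧ P ⊓ W = Q)
            ↔ (finrank F P = k ∧ P ⊓ W = Q) := by
        intro P
        constructor
        · rintro ⟨⟨h1, _⟩, h3⟩; exact ⟨h1, h3⟩
        · rintro ⟨h1, h3⟩; exact ⟨⟨h1, by rw [h3, hQj]⟩, h3⟩
      rw [Nat.card_congr (Equiv.subtypeEquivRight heq),
        cardA A W Q h hQW hQj hjk, card_sub_restrict,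
        countSub (finrank F A) A rfl (k - j)])
  rw [hmain, card_sub_restrict, countSub (finrank F W) W rfl j]

lemma isCompl_comap {X Y E : Submodule F V} (hX : X ≤ E) (hY : Y ≤ E)
    (hinf : X ⊓ Y = ⊥) (hsup : X ⊔ Y = E) :
    IsCompl (X.comap E.subtype) (Y.comap E.subtype) := by
  constructor
  · rw [disjoint_iff, Submodule.eq_bot_iff]
    rintro v ⟨hvX, hvY⟩
    simp only [SetLike.mem_coe, Submodule.mem_comap] at hvX hvY
    have hv : (v : V) ∈ X ⊓ Y := ⟨hvX, hvY⟩
    rw [hinf, Submodule.mem_bot] at hv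
    exact Subtype.ext hv
  · rw [codisjoint_iff, eq_top_iff]
    rintro v -
    have hv : (v : V) ∈ X ⊔ Y := by rw [hsup]; exact v.2
    rw [Submodule.mem_sup] at hv
    obtain ⟨x, hx, y, hy, hxy⟩ := hv
    rw [Submodule.mem_sup]
    refine ⟨⟨x, hX hx⟩, hx, ⟨y, hY hy⟩, hy, ?_⟩
    apply Subtype.ext
    exact hxy

lemma finrank_comap_subtype_of_le' {X E : Submodule F V} (hX : X ≤ E) :
    finrank F (X.comap E.subtype) = finrank F X := finrank_comap_subtype_of_le hX

/-- transporting a double condition into a subspace -/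
lemma card_sub_restrict₂ (E W : Submodule F V) (hWE : W ≤ E) (k j : ℕ) :
    Nat.card {Q : Submodule F V // Q ≤ E ∧ finrank F Q = k ∧ finrank F ↥(Q ⊓ W) = j}
      = Nat.card {T : Submodule F E //
          finrank F T = k ∧ finrank F ↥(T ⊓ W.comap E.subtype) = j} := by
  apply Nat.card_congr
  refine Equiv.symm ?_
  refine Equiv.trans (Equiv.subtypeEquiv (Submodule.MapSubtype.orderIso E).toEquiv ?_)
    (Equiv.subtypeSubtypeEquivSubtypeInter _ _)
  intro T
  have hT : (((Submodule.MapSubtype.orderIso E).toEquiv T : {S : Submodule F V // S ≤ E}) :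
      Submodule F V) = Submodule.map E.subtype T := rfl
  show _ ↔ (finrank F _ = k ∧ finrank F _ = j)
  rw [hT]
  have h1 : finrank F (Submodule.map E.subtype T) = finrank F T :=
    Submodule.finrank_map_subtype_eq E T
  have h2 : Submodule.map E.subtype T ⊓ W
      = Submodule.map E.subtype (T ⊓ W.comap E.subtype) := by
    rw [Submodule.map_inf E.subtype Subtype.coe_injective,
      Submodule.map_comap_subtype, inf_eq_right.mpr hWE]
  rw [h2, h1, Submodule.finrank_map_subtype_eq E (T ⊓ W.comap E.subtype)]

end LemmaC
section Main

variable {F : Type} [Field F] [Fintype F]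

lemma finrank_Vspan_card {N : ℕ} (s : Set (Fin N)) :
    finrank F (Vspan F s) = Nat.card {j : Fin N // j ∈ s} := by
  classical
  rw [finrank_Vspan s, Nat.card_eq_fintype_card]

lemma finrank_Vspan_interval (a b N : ℕ) (hb : b ≤ N) :
    finrank F (Vspan F {j : Fin N | a ≤ (j : ℕ) ∧ (j : ℕ) < b}) = b - a := by
  have e : {j : Fin N // j ∈ {j : Fin N | a ≤ (j : ℕ) ∧ (j : ℕ) < b}} ≃ Fin (b - a) :=
    (Equiv.subtypeEquivRight (fun j => Iff.rfl)).trans (intervalEquiv a b N hb)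
  rw [finrank_Vspan_card, Nat.card_congr e, Nat.card_eq_fintype_card, Fintype.card_fin]

lemma finrank_Vspan_ge (c N : ℕ) (hc : c ≤ N) :
    finrank F (Vspan F {j : Fin N | c ≤ (j : ℕ)}) = N - c := by
  have hset : {j : Fin N | c ≤ (j : ℕ)} = {j : Fin N | c ≤ (j : ℕ) ∧ (j : ℕ) < N} := by
    ext j; simp [j.isLt]
  rw [hset, finrank_Vspan_interval c N N le_rfl]

lemma finrank_Vspan_lt (c N : ℕ) (hc : c ≤ N) :
    finrank F (Vspan F {j : Fin N | (j : ℕ) < c}) = c := by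
  have hset : {j : Fin N | (j : ℕ) < c} = {j : Fin N | 0 ≤ (j : ℕ) ∧ (j : ℕ) < c} := by
    ext j; simp
  rw [hset, finrank_Vspan_interval 0 c N hc]
  omega

lemma Vspan_mono {N : ℕ} {s t : Set (Fin N)} (h : s ⊆ t) : Vspan F s ≤ Vspan F t := by
  intro v hv
  rw [mem_Vspan] at hv ⊢
  intro j hj
  exact hv j (fun hjs => hj (h hjs))

end Main

/-- The number of subspaces of type `(k₁,k₂,k₃)` of `F_q^{n₁+n₂+n₃}`. -/
theorem stmt6 {F : Type} [Field F] [Fintype F] (q n₁ n₂ n₃ k₁ k₂ k₃ : ℕ)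
    (hq : Fintype.card F = q)
    (h21 : k₂ ≤ k₁) (h1 : k₁ - k₂ ≤ n₁) (h32 : k₃ ≤ k₂) (h2 : k₂ - k₃ ≤ n₂) (h3 : k₃ ≤ n₃) :
    Nat.card {P : Submodule F (Fin (n₁ + n₂ + n₃) → F) //
        Module.finrank F P = k₁ ∧
        Module.finrank F ↥(P ⊓ lastSpan F (n₁ + n₂ + n₃) n₁) = k₂ ∧
        Module.finrank F ↥(P ⊓ lastSpan F (n₁ + n₂ + n₃) (n₁ + n₂)) = k₃} =
      gaussBinom q n₃ k₃ * (q ^ ((k₂ - k₃) * (n₃ - k₃)) * gaussBinom q n₂ (k₂ - k₃)) *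
        (q ^ ((k₁ - k₂) * (n₂ + n₃ - k₂)) * gaussBinom q n₁ (k₁ - k₂)) := by
  classical
  subst hq
  set N := n₁ + n₂ + n₃ with hN
  have hlast2 : lastSpan F N n₁ = Vspan F {j : Fin N | n₁ ≤ (j : ℕ)} := rfl
  have hlast3 : lastSpan F N (n₁ + n₂) = Vspan F {j : Fin N | n₁ + n₂ ≤ (j : ℕ)} := rfl
  rw [hlast2, hlast3]
  set E₂ : Submodule F (Fin N → F) := Vspan F {j : Fin N | n₁ ≤ (j : ℕ)} with hE₂
  set E₃ : Submodule F (Fin N → F) := Vspan F {j : Fin N | n₁ + n₂ ≤ (j : ℕ)} with hE₃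
  set A₁ : Submodule F (Fin N → F) := Vspan F {j : Fin N | (j : ℕ) < n₁} with hA₁
  set X₂ : Submodule F (Fin N → F) :=
    Vspan F {j : Fin N | n₁ ≤ (j : ℕ) ∧ (j : ℕ) < n₁ + n₂} with hX₂
  have hcompl : IsCompl A₁ E₂ := by
    have h := isCompl_Vspan (F := F) {j : Fin N | n₁ ≤ (j : ℕ)}
    have hs : {j : Fin N | n₁ ≤ (j : ℕ)}ᶜ = {j : Fin N | (j : ℕ) < n₁} := by
      ext j
      simp only [Set.mem_compl_iff, Set.mem_setOf_eq, not_le]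
    rw [hs] at h
    exact h
  have hE32 : E₃ ≤ E₂ := by
    apply Vspan_mono
    intro j hj
    simp only [Set.mem_setOf_eq] at hj ⊢
    omega
  have hXE : X₂ ≤ E₂ := by
    apply Vspan_mono
    intro j hj
    simp only [Set.mem_setOf_eq] at hj ⊢
    omega
  have hd2 : finrank F E₂ = n₂ + n₃ := by
    rw [hE₂, finrank_Vspan_ge n₁ N (by omega)]
    omega
  have hd3 : finrank F E₃ = n₃ := by
    rw [hE₃, finrank_Vspan_ge (n₁ + n₂) N (by omega)]
    omega
  have hdA : finrank F A₁ = n₁ := by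
    rw [hA₁, finrank_Vspan_lt n₁ N (by omega)]
  have hdX : finrank F X₂ = n₂ := by
    rw [hX₂, finrank_Vspan_interval n₁ (n₁ + n₂) N (by omega)]
    omega
  have hX3inf : X₂ ⊓ E₃ = ⊥ := by
    rw [hX₂, hE₃, Vspan_inf]
    have hs : {j : Fin N | n₁ ≤ (j : ℕ) ∧ (j : ℕ) < n₁ + n₂}
        ∩ {j : Fin N | n₁ + n₂ ≤ (j : ℕ)} = ∅ := by
      ext j
      simp only [Set.mem_inter_iff, Set.mem_setOf_eq, Set.mem_empty_iff_false, iff_false]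
      omega
    rw [hs, Vspan_empty]
  have hX3sup : X₂ ⊔ E₃ = E₂ := by
    rw [hX₂, hE₃, hE₂, Vspan_sup]
    have hs : {j : Fin N | n₁ ≤ (j : ℕ) ∧ (j : ℕ) < n₁ + n₂}
        ∪ {j : Fin N | n₁ + n₂ ≤ (j : ℕ)} = {j : Fin N | n₁ ≤ (j : ℕ)} := by
      ext j
      simp only [Set.mem_union, Set.mem_setOf_eq]
      omega
    rw [hs]
  haveI : Finite (Submodule F (Fin N → F)) := finite_submodule F _
  have hinf3 : ∀ P : Submodule F (Fin N → F), (P ⊓ E₂) ⊓ E₃ = P ⊓ E₃ := by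
    intro P
    rw [inf_assoc, inf_eq_right.mpr hE32]
  have hmain := card_fiber_const
    (fun P : Submodule F (Fin N → F) => finrank F P = k₁ ∧ finrank F ↥(P ⊓ E₂) = k₂ ∧
      finrank F ↥(P ⊓ E₃) = k₃)
    (fun Q : Submodule F (Fin N → F) => Q ≤ E₂ ∧ finrank F Q = k₂ ∧
      finrank F ↥(Q ⊓ E₃) = k₃)
    (fun P => P ⊓ E₂)
    (by
      rintro P ⟨hP1, hP2, hP3⟩
      refine ⟨inf_le_right, hP2, ?_⟩
      rw [hinf3 P]
      exact hP3)
    (Fintype.card F ^ ((k₁ - k₂) * (n₂ + n₃ - k₂)) *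
      gaussBinom (Fintype.card F) n₁ (k₁ - k₂))
    (by
      rintro Q ⟨hQE, hQk, hQ3⟩
      have heq : ∀ P : Submodule F (Fin N → F),
          ((finrank F P = k₁ ∧ finrank F ↥(P ⊓ E₂) = k₂ ∧ finrank F ↥(P ⊓ E₃) = k₃)
            ∧ P ⊓ E₂ = Q) ↔ (finrank F P = k₁ ∧ P ⊓ E₂ = Q) := by
        intro P
        constructor
        · rintro ⟨⟨hh1, _, _⟩, hh4⟩; exact ⟨hh1, hh4⟩
        · rintro ⟨hh1, hh4⟩
          refine ⟨⟨hh1, by rw [hh4]; exact hQk, ?_⟩, hh4⟩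
          have h5 : P ⊓ E₃ = Q ⊓ E₃ := by rw [← hh4, hinf3 P]
          rw [h5]
          exact hQ3
      rw [Nat.card_congr (Equiv.subtypeEquivRight heq),
        cardA A₁ E₂ Q hcompl hQE hQk h21, card_sub_restrict,
        countSub (finrank F A₁) A₁ rfl (k₁ - k₂), hdA, hd2])
  rw [hmain]
  have hindex : Nat.card {Q : Submodule F (Fin N → F) //
      Q ≤ E₂ ∧ finrank F Q = k₂ ∧ finrank F ↥(Q ⊓ E₃) = k₃}
      = gaussBinom (Fintype.card F) n₃ k₃ *
        (Fintype.card F ^ ((k₂ - k₃) * (n₃ - k₃)) *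
          gaussBinom (Fintype.card F) n₂ (k₂ - k₃)) := by
    rw [card_sub_restrict₂ E₂ E₃ hE32 k₂ k₃]
    have hc : IsCompl (X₂.comap E₂.subtype) (E₃.comap E₂.subtype) :=
      isCompl_comap hXE hE32 hX3inf hX3sup
    rw [cardC (X₂.comap E₂.subtype) (E₃.comap E₂.subtype) hc h32,
      finrank_comap_subtype_of_le hE32, finrank_comap_subtype_of_le hXE, hd3, hdX]
  rw [hindex]
end

section
/- Let P be a fixed subspace of type (k₁,…,k_t) in F_q^{n₁+⋯+n_t}. The number of subspaces of type (l₁,…,l_t) contained in P equals [k_t choose l_t]_q · ∏_{j=1}^{t−1} q^{(l_j−l_{j+1})(k_{j+1}−l_{j+1})} [k_j−k_{j+1} choose l_j−l_{j+1}]_q, provided 0 ≤ l_i−l_{i+1} ≤ k_i−k_{i+1} ≤ n_i for 1 ≤ i ≤ t−1 and 0 ≤ l_t ≤ k_t ≤ n_t; this count is independent of the choice of P. -/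
/-- `P` is a subspace of type `(k 0, k 1, …, k (t-1))` of `F_q^{n 0 + ⋯ + n (t-1)}`. -/
def IsTypeP (F : Type) [Field F] (t : ℕ) (n k : ℕ → ℕ)
    (P : Submodule F (Fin (∑ m ∈ Finset.range t, n m) → F)) : Prop :=
  Module.finrank F P = k 0 ∧
    ∀ i, 1 ≤ i → i < t →
      Module.finrank F
        ↥(P ⊓ lastSpan F (∑ m ∈ Finset.range t, n m) (∑ j ∈ Finset.range i, n j)) = k i

set_option linter.unusedSectionVars false
set_option maxHeartbeats 1000000

open Module Submodule

section Aux

private lemma prodA_succ (q s d : ℕ) :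
    ∏ i ∈ Finset.range (d+1), ((q:ℤ)^(s+1) - (q:ℤ)^i)
      = ((q:ℤ)^(s+1) - 1) * (q:ℤ)^d * ∏ i ∈ Finset.range d, ((q:ℤ)^s - (q:ℤ)^i) := by
  rw [Finset.prod_range_succ']
  have : ∀ i ∈ Finset.range d, ((q:ℤ)^(s+1) - (q:ℤ)^(i+1)) = (q:ℤ) * ((q:ℤ)^s - (q:ℤ)^i) := by
    intro i _; ring
  rw [Finset.prod_congr rfl this, Finset.prod_mul_distrib]
  simp [Finset.prod_const]
  ring

lemma gauss_key (q : ℕ) : ∀ m d : ℕ,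
    (gaussBinom q m d : ℤ) * ∏ i ∈ Finset.range d, ((q:ℤ)^d - (q:ℤ)^i)
      = ∏ i ∈ Finset.range d, ((q:ℤ)^m - (q:ℤ)^i) := by
  intro m
  induction m with
  | zero =>
    intro d
    cases d with
    | zero => simp [gaussBinom]
    | succ d =>
      rw [show gaussBinom q 0 (d+1) = 0 from rfl]
      push_cast
      rw [zero_mul]
      symm
      exact Finset.prod_eq_zero (Finset.mem_range.mpr (Nat.succ_pos d)) (by simp)
  | succ m ih =>
    intro d
    cases d with
    | zero => simp [gaussBinom]
    | succ d =>
      rw [show gaussBinom q (m+1) (d+1) = gaussBinom q m d + q ^ (d + 1) * gaussBinom q m (d+1) from rfl]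
      have h1 := ih d
      have h2 := ih (d+1)
      rw [prodA_succ q d d] at h2 ⊢
      rw [Finset.prod_range_succ] at h2
      rw [prodA_succ q m d]
      push_cast
      linear_combination (((q:ℤ)^(d+1)-1)*(q:ℤ)^d)*h1 + ((q:ℤ)^(d+1))*h2
lemma cast_prod_sub (q s d : ℕ) (hq : 1 ≤ q) (hsd : d ≤ s) :
    ((∏ i ∈ Finset.range d, (q^s - q^i) : ℕ) : ℤ) = ∏ i ∈ Finset.range d, ((q:ℤ)^s - (q:ℤ)^i) := by
  rw [Nat.cast_prod]
  refine Finset.prod_congr rfl fun i hi => ?_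
  rw [Nat.cast_sub (Nat.pow_le_pow_right hq (le_trans (Nat.le_of_lt (Finset.mem_range.mp hi)) hsd))]
  push_cast; ring

lemma gauss_key_nat (q : ℕ) (hq : 1 ≤ q) (m d : ℕ) (hdm : d ≤ m) :
    gaussBinom q m d * ∏ i ∈ Finset.range d, (q^d - q^i) = ∏ i ∈ Finset.range d, (q^m - q^i) := by
  have h := gauss_key q m d
  have := cast_prod_sub q d d hq le_rfl
  have := cast_prod_sub q m d hq hdm
  have goal : ((gaussBinom q m d * ∏ i ∈ Finset.range d, (q^d - q^i) : ℕ) : ℤ)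
      = ((∏ i ∈ Finset.range d, (q^m - q^i) : ℕ) : ℤ) := by
    rw [Nat.cast_mul, ‹((∏ i ∈ Finset.range d, (q^d - q^i) : ℕ) : ℤ) = _›,
      ‹((∏ i ∈ Finset.range d, (q^m - q^i) : ℕ) : ℤ) = _›]
    exact h
  exact_mod_cast goal
end Aux

section Count
variable {F V : Type} [Field F] [Fintype F] [AddCommGroup V] [Module F V] [FiniteDimensional F V]

lemma nat_card_sigma_const {ι : Type} [Finite ι] (f : ι → Type) [∀ i, Finite (f i)] (c : ℕ)
    (h : ∀ i, Nat.card (f i) = c) : Nat.card (Σ i, f i) = Nat.card ι * c := by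
  have := Fintype.ofFinite ι
  have : ∀ i, Fintype (f i) := fun i => Fintype.ofFinite _
  simp only [Nat.card_eq_fintype_card] at h ⊢
  simp [Fintype.card_sigma, h, Finset.sum_const, mul_comm]

lemma card_tuples_mod (W : Submodule F V) (d : ℕ) (hd : d ≤ finrank F (V ⧸ W)) :
    Nat.card {s : Fin d → V // LinearIndependent F (W.mkQ ∘ s)} =
      (Fintype.card F)^(d * finrank F W) *
        ∏ i ∈ Finset.range d, ((Fintype.card F)^(finrank F (V ⧸ W)) - (Fintype.card F)^i) := by
  classical
  have : Finite V := Module.finite_of_finite F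
  have : Finite (V ⧸ W) := Quotient.finite _
  obtain ⟨σ, hσ⟩ := W.mkQ.exists_rightInverse_of_surjective (Submodule.range_mkQ W)
  have hσ' : ∀ x : V ⧸ W, (Submodule.Quotient.mk (σ x) : V ⧸ W) = x := fun x => by
    have := LinearMap.ext_iff.mp hσ x
    simpa [Submodule.mkQ_apply] using this
  have e : {s : Fin d → V // LinearIndependent F (W.mkQ ∘ s)} ≃
      (Fin d → W) × {c : Fin d → V ⧸ W // LinearIndependent F c} :=
  { toFun := fun s =>
      (fun i => ⟨s.1 i - σ (W.mkQ (s.1 i)), by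
        rw [← Submodule.Quotient.mk_eq_zero W]
        rw [← Submodule.mkQ_apply]
        simp [hσ']⟩,
       ⟨fun i => W.mkQ (s.1 i), s.2⟩)
    invFun := fun p => ⟨fun i => (p.1 i : V) + σ (p.2.1 i), by
      have : (W.mkQ ∘ fun i => (p.1 i : V) + σ (p.2.1 i)) = p.2.1 := by
        funext i
        simp [hσ', (Submodule.Quotient.mk_eq_zero W).mpr (p.1 i).2]
      rw [this]; exact p.2.2⟩
    left_inv := fun s => by
      ext i
      simp
    right_inv := fun p => by
      ext i
      · simp [hσ', (Submodule.Quotient.mk_eq_zero W).mpr (p.1 i).2]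
      · simp [hσ', (Submodule.Quotient.mk_eq_zero W).mpr (p.1 i).2] }
  rw [Nat.card_congr e, Nat.card_prod]
  have h1 : Nat.card (Fin d → W) = (Fintype.card F)^(d * finrank F W) := by
    have : Finite W := Module.finite_of_finite F
    have := Fintype.ofFinite W
    rw [Nat.card_eq_fintype_card, Fintype.card_fun]
    rw [card_eq_pow_finrank (K := F) (V := W), Fintype.card_fin, ← pow_mul, mul_comm]
  have h2 : Nat.card {c : Fin d → V ⧸ W // LinearIndependent F c} =
      ∏ i ∈ Finset.range d, ((Fintype.card F)^(finrank F (V ⧸ W)) - (Fintype.card F)^i) := by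
    rw [card_linearIndependent hd]
    rw [Finset.prod_range fun i => ((Fintype.card F)^(finrank F (V ⧸ W)) - (Fintype.card F)^i)]
  rw [h1, h2]

lemma card_disjoint_subspaces (W : Submodule F V) (d : ℕ)
    (hd : d + finrank F W ≤ finrank F V) :
    Nat.card {U : Submodule F V // finrank F U = d ∧ U ⊓ W = ⊥} =
      (Fintype.card F)^(d * finrank F W) *
        gaussBinom (Fintype.card F) (finrank F V - finrank F W) d := by
  classical
  have hV : Finite V := Module.finite_of_finite F
  have hQfin : Finite (V ⧸ W) := Quotient.finite _
  have hSub : Finite (Submodule F V) :=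
    Finite.of_injective (fun p => (p : Set V)) SetLike.coe_injective
  set q := Fintype.card F with hqdef
  have hq2 : 1 < q := Fintype.one_lt_card
  have hrk : finrank F (V ⧸ W) + finrank F W = finrank F V :=
    Submodule.finrank_quotient_add_finrank W
  have hWle : finrank F W ≤ finrank F V := by omega
  have hm : finrank F (V ⧸ W) = finrank F V - finrank F W := by omega
  have hdm : d ≤ finrank F (V ⧸ W) := by omega
  -- the fibration map
  set T := {s : Fin d → V // LinearIndependent F (W.mkQ ∘ s)} with hT
  set S := {U : Submodule F V // finrank F U = d ∧ U ⊓ W = ⊥} with hS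
  have hfmem : ∀ s : T, finrank F (span F (Set.range s.1)) = d ∧ span F (Set.range s.1) ⊓ W = ⊥ := by
    intro s
    have hLI : LinearIndependent F s.1 := s.2.of_comp W.mkQ
    constructor
    · rw [finrank_span_eq_card hLI, Fintype.card_fin]
    · rw [eq_bot_iff]
      rintro x ⟨hx1, hx2⟩
      obtain ⟨c, hc⟩ := (mem_span_range_iff_exists_fun F).mp hx1
      have hzero : ∑ i, c i • (W.mkQ ∘ s.1) i = 0 := by
        have : W.mkQ x = 0 := by
          rw [Submodule.mkQ_apply, Submodule.Quotient.mk_eq_zero]; exact hx2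
        rw [← hc] at this
        simpa using this
      have hc0 : ∀ i, c i = 0 := Fintype.linearIndependent_iff.mp s.2 c hzero
      have : x = 0 := by rw [← hc]; simp [hc0]
      simp [this]
  let f : T → S := fun s => ⟨span F (Set.range s.1), hfmem s⟩
  -- fiber equivalence
  have fiber_card : ∀ U : S, Nat.card {s : T // f s = U} = ∏ i ∈ Finset.range d, (q^d - q^i) := by
    intro U
    have hker : LinearMap.ker (W.mkQ ∘ₗ U.1.subtype) = ⊥ := by
      rw [eq_bot_iff]
      rintro x hx
      have : (x : V) ∈ W := by
        have := hx
        simp only [LinearMap.mem_ker, LinearMap.comp_apply, Submodule.subtype_apply,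
          Submodule.mkQ_apply, Submodule.Quotient.mk_eq_zero] at this
        exact this
      have : (x : V) ∈ U.1 ⊓ W := ⟨x.2, this⟩
      rw [U.2.2] at this
      simpa using Subtype.ext (by simpa using this : (x : V) = 0)
    have e : {s : T // f s = U} ≃ {s' : Fin d → U.1 // LinearIndependent F s'} :=
    { toFun := fun s => ⟨fun i => ⟨s.1.1 i, by
        have : s.1.1 i ∈ span F (Set.range s.1.1) := subset_span (Set.mem_range_self i)
        have heq : span F (Set.range s.1.1) = U.1 := congrArg Subtype.val s.2
        rwa [heq] at this⟩, by
        have hLI : LinearIndependent F s.1.1 := s.1.2.of_comp W.mkQ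
        exact hLI.of_comp U.1.subtype⟩
      invFun := fun s' => ⟨⟨fun i => (s'.1 i : V), by
        have : (W.mkQ ∘ₗ U.1.subtype) ∘ s'.1 = W.mkQ ∘ fun i => (s'.1 i : V) := by
          funext i; rfl
        rw [← this]
        exact s'.2.map' _ hker⟩, by
        apply Subtype.ext
        show span F (Set.range fun i => (s'.1 i : V)) = U.1
        have hle : span F (Set.range fun i => (s'.1 i : V)) ≤ U.1 := by
          rw [span_le]; rintro x ⟨i, rfl⟩; exact (s'.1 i).2
        have hLI : LinearIndependent F fun i => (s'.1 i : V) := by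
          have : U.1.subtype ∘ s'.1 = fun i => (s'.1 i : V) := by funext i; rfl
          rw [← this]
          exact s'.2.map' _ (Submodule.ker_subtype _)
        apply Submodule.eq_of_le_of_finrank_le hle
        rw [finrank_span_eq_card hLI, Fintype.card_fin, U.2.1]⟩
      left_inv := fun s => by ext i; rfl
      right_inv := fun s' => by ext i; rfl }
    rw [Nat.card_congr e]
    have : Finite U.1 := Module.finite_of_finite F
    rw [card_linearIndependent U.2.1.ge]
    rw [U.2.1, Finset.prod_range fun i => (q^d - q^i)]
  -- put it together
  have hsig : Nat.card T = Nat.card S * ∏ i ∈ Finset.range d, (q^d - q^i) := by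
    rw [← Nat.card_congr (Equiv.sigmaFiberEquiv f)]
    exact nat_card_sigma_const _ _ (fun U => fiber_card U)
  have htup := card_tuples_mod W d hdm
  rw [← hT] at htup
  rw [hsig] at htup
  rw [hm] at htup
  have hgauss := gauss_key_nat q (le_of_lt hq2) (finrank F V - finrank F W) d (by omega)
  rw [← hgauss] at htup
  have hpos : 0 < ∏ i ∈ Finset.range d, (q^d - q^i) := by
    apply Finset.prod_pos
    intro i hi
    have : q^i < q^d := Nat.pow_lt_pow_right hq2 (Finset.mem_range.mp hi)
    omega
  have htup2 : Nat.card S * ∏ i ∈ Finset.range d, (q ^ d - q ^ i) =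
      (Fintype.card F ^ (d * finrank F ↥W) * gaussBinom q (finrank F V - finrank F ↥W) d) *
        ∏ i ∈ Finset.range d, (q ^ d - q ^ i) := htup.trans (by ring)
  exact Nat.eq_of_mul_eq_mul_right hpos htup2
lemma finrank_map_mkQ_add (Q' Q : Submodule F V) (h : Q' ≤ Q) :
    finrank F (Q.map Q'.mkQ) + finrank F Q' = finrank F Q := by
  have hrn := LinearMap.finrank_range_add_finrank_ker (Q'.mkQ ∘ₗ Q.subtype)
  have hr : LinearMap.range (Q'.mkQ ∘ₗ Q.subtype) = Q.map Q'.mkQ := by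
    rw [LinearMap.range_comp, Submodule.range_subtype]
  have hk : LinearMap.ker (Q'.mkQ ∘ₗ Q.subtype) = Q'.comap Q.subtype := by
    rw [LinearMap.ker_comp, Submodule.ker_mkQ]
  have hkrank : finrank F (Q'.comap Q.subtype) = finrank F Q' := by
    rw [← Submodule.finrank_map_subtype_eq Q (Q'.comap Q.subtype), Submodule.map_comap_subtype,
      inf_of_le_right h]
  rw [hr, hk, hkrank] at hrn
  exact hrn

lemma card_extensions (W Q' : Submodule F V) (hQ'W : Q' ≤ W) (l0 : ℕ)
    (hl : finrank F Q' ≤ l0) (hle : l0 - finrank F Q' ≤ finrank F V - finrank F W) :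
    Nat.card {Q : Submodule F V // finrank F Q = l0 ∧ Q ⊓ W = Q'} =
      (Fintype.card F)^((l0 - finrank F Q') * (finrank F W - finrank F Q')) *
        gaussBinom (Fintype.card F) (finrank F V - finrank F W) (l0 - finrank F Q') := by
  classical
  set l1 := finrank F Q' with hl1
  set k1 := finrank F W with hk1
  set a := finrank F V with ha
  have hl1k1 : l1 ≤ k1 := Submodule.finrank_mono hQ'W
  have hk1a : k1 ≤ a := Submodule.finrank_le W
  have hq1 : finrank F (V ⧸ Q') + l1 = a := Submodule.finrank_quotient_add_finrank Q'
  have hWbar : finrank F (W.map Q'.mkQ) + l1 = k1 := finrank_map_mkQ_add Q' W hQ'W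
  have e : {Q : Submodule F V // finrank F Q = l0 ∧ Q ⊓ W = Q'} ≃
      {U : Submodule F (V ⧸ Q') // finrank F U = l0 - l1 ∧ U ⊓ (W.map Q'.mkQ) = ⊥} :=
  { toFun := fun Q => ⟨Q.1.map Q'.mkQ, by
      have hQ'Q : Q' ≤ Q.1 := le_trans (le_of_eq Q.2.2.symm) inf_le_left
      constructor
      · have := finrank_map_mkQ_add Q' Q.1 hQ'Q
        rw [Q.2.1] at this
        omega
      · rw [eq_bot_iff]
        rintro x ⟨hx1, hx2⟩
        obtain ⟨qv, hqv, rfl⟩ := hx1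
        obtain ⟨w, hw, hww⟩ := hx2
        have : qv - w ∈ Q' := by
          rw [← Submodule.Quotient.eq Q']
          exact (by simpa [Submodule.mkQ_apply] using hww.symm)
        have hqvW : qv ∈ W := by
          have : qv - w ∈ W := hQ'W this
          simpa using add_mem this hw
        have : qv ∈ Q' := by rw [← Q.2.2]; exact ⟨hqv, hqvW⟩
        simp [Submodule.mkQ_apply, (Submodule.Quotient.mk_eq_zero Q').mpr this]⟩
    invFun := fun U => ⟨U.1.comap Q'.mkQ, by
      have hker : Q' ≤ U.1.comap Q'.mkQ := by
        intro x hx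
        simp [Submodule.mem_comap, Submodule.mkQ_apply,
          (Submodule.Quotient.mk_eq_zero Q').mpr hx]
      have hmapcomap : (U.1.comap Q'.mkQ).map Q'.mkQ = U.1 :=
        Submodule.map_comap_eq_of_surjective (Submodule.mkQ_surjective Q') U.1
      constructor
      · have := finrank_map_mkQ_add Q' (U.1.comap Q'.mkQ) hker
        rw [hmapcomap, U.2.1] at this
        omega
      · apply le_antisymm
        · rintro x ⟨hx1, hx2⟩
          have hmem : Q'.mkQ x ∈ U.1 ⊓ (W.map Q'.mkQ) :=
            ⟨hx1, Submodule.mem_map_of_mem hx2⟩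
          rw [U.2.2] at hmem
          have : Q'.mkQ x = 0 := hmem
          rwa [Submodule.mkQ_apply, Submodule.Quotient.mk_eq_zero] at this
        · exact le_inf hker hQ'W⟩
    left_inv := fun Q => by
      apply Subtype.ext
      have hQ'Q : Q' ≤ Q.1 := le_trans (le_of_eq Q.2.2.symm) inf_le_left
      show (Q.1.map Q'.mkQ).comap Q'.mkQ = Q.1
      rw [Submodule.comap_map_eq, Submodule.ker_mkQ, sup_eq_left.mpr hQ'Q]
    right_inv := fun U => by
      apply Subtype.ext
      exact Submodule.map_comap_eq_of_surjective (Submodule.mkQ_surjective Q') U.1 }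
  rw [Nat.card_congr e]
  rw [card_disjoint_subspaces (W.map Q'.mkQ) (l0 - l1) (by omega)]
  rw [show finrank F ↥(W.map Q'.mkQ) = k1 - l1 by omega,
    show finrank F (V ⧸ Q') = a - l1 by omega,
    show a - l1 - (k1 - l1) = a - k1 by omega]

lemma flag_count : ∀ (t : ℕ) (V : Type) [AddCommGroup V] [Module F V] [FiniteDimensional F V]
    (W : ℕ → Submodule F V) (k l : ℕ → ℕ), 1 ≤ t →
    finrank F V = k 0 →
    (∀ i, 1 ≤ i → i < t → finrank F ↥(W i) = k i) →
    (∀ i, 1 ≤ i → i + 1 < t → W (i + 1) ≤ W i) →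
    (∀ i < t - 1, l (i+1) ≤ l i ∧ l i - l (i+1) ≤ k i - k (i+1) ∧ k (i+1) ≤ k i) →
    l (t-1) ≤ k (t-1) →
    Nat.card {Q : Submodule F V // finrank F Q = l 0 ∧
        ∀ i, 1 ≤ i → i < t → finrank F ↥(Q ⊓ W i) = l i} =
      gaussBinom (Fintype.card F) (k (t-1)) (l (t-1)) *
        ∏ j ∈ Finset.range (t-1),
          (Fintype.card F) ^ ((l j - l (j+1)) * (k (j+1) - l (j+1))) *
            gaussBinom (Fintype.card F) (k j - k (j+1)) (l j - l (j+1)) := by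
  intro t
  induction t with
  | zero => intro V _ _ _ W k l ht; omega
  | succ t ih =>
    intro V _ _ _ W k l _ hV hW hchain hineq hlast
    have hFinV : Finite V := Module.finite_of_finite F
    have hSub : Finite (Submodule F V) :=
      Finite.of_injective (fun p => (p : Set V)) SetLike.coe_injective
    rcases Nat.eq_zero_or_pos t with rfl | ht1
    · -- base case t+1 = 1
      have e : {Q : Submodule F V // finrank F Q = l 0 ∧
          ∀ i, 1 ≤ i → i < 1 → finrank F ↥(Q ⊓ W i) = l i} ≃
          {U : Submodule F V // finrank F U = l 0 ∧ U ⊓ (⊥ : Submodule F V) = ⊥} :=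
        Equiv.subtypeEquivRight (fun Q => by
          constructor
          · rintro ⟨h1, _⟩; exact ⟨h1, by simp⟩
          · rintro ⟨h1, _⟩; exact ⟨h1, by omega⟩)
      rw [Nat.card_congr e]
      rw [card_disjoint_subspaces ⊥ (l 0) (by rw [finrank_bot, hV, add_zero]; simpa using hlast)]
      simp [finrank_bot, hV]
    · -- inductive step, t ≥ 1
      set q := Fintype.card F with hq
      have hWle1 : ∀ i, 1 ≤ i → i < t + 1 → W i ≤ W 1 := by
        intro i
        induction i with
        | zero => omega
        | succ i ihi =>
          intro h1 hlt
          rcases Nat.eq_zero_or_pos i with rfl | hi1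
          · exact le_rfl
          · exact le_trans (hchain i hi1 hlt) (ihi hi1 (by omega))
      set midS := {R : Submodule F V // R ≤ W 1 ∧ finrank F R = l 1 ∧
        ∀ i, 2 ≤ i → i < t + 1 → finrank F ↥(R ⊓ W i) = l i} with hmidS
      set S := {Q : Submodule F V // finrank F Q = l 0 ∧
        ∀ i, 1 ≤ i → i < t + 1 → finrank F ↥(Q ⊓ W i) = l i} with hS
      let g : S → midS := fun Q => ⟨Q.1 ⊓ W 1, inf_le_right,
        Q.2.2 1 le_rfl (by omega),
        fun i h2 hi => by
          have : (Q.1 ⊓ W 1) ⊓ W i = Q.1 ⊓ W i := by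
            rw [inf_assoc, inf_eq_right.mpr (hWle1 i (by omega) hi)]
          rw [this]
          exact Q.2.2 i (by omega) hi⟩
      -- fiber cardinality
      have hk1 : finrank F ↥(W 1) = k 1 := hW 1 le_rfl (by omega)
      have hineq0 := hineq 0 (by omega)
      have fib : ∀ R : midS, Nat.card {Q : S // g Q = R} =
          q ^ ((l 0 - l 1) * (k 1 - l 1)) * gaussBinom q (k 0 - k 1) (l 0 - l 1) := by
        intro R
        have e : {Q : S // g Q = R} ≃
            {Q : Submodule F V // finrank F Q = l 0 ∧ Q ⊓ W 1 = R.1} :=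
        { toFun := fun Q => ⟨Q.1.1, Q.1.2.1, congrArg Subtype.val Q.2⟩
          invFun := fun Q => ⟨⟨Q.1, Q.2.1, fun i h1 hi => by
            rcases Nat.eq_or_lt_of_le h1 with h|h
            · rw [← h, Q.2.2, R.2.2.1]
            · have e1 : Q.1 ⊓ W i = (Q.1 ⊓ W 1) ⊓ W i := by
                rw [inf_assoc, inf_eq_right.mpr (hWle1 i (by omega) hi)]
              rw [e1, Q.2.2]
              exact R.2.2.2 i (by omega) hi⟩, Subtype.ext Q.2.2⟩
          left_inv := fun Q => by ext : 2 <;> rfl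
          right_inv := fun Q => by ext : 1; rfl }
        rw [Nat.card_congr e]
        have := card_extensions (W 1) R.1 R.2.1 (l 0)
          (by rw [R.2.2.1]; exact hineq0.1)
          (by rw [R.2.2.1, hk1, hV]; exact hineq0.2.1)
        rw [this, R.2.2.1, hk1, hV]
      have hsig : Nat.card S = Nat.card midS *
          (q ^ ((l 0 - l 1) * (k 1 - l 1)) * gaussBinom q (k 0 - k 1) (l 0 - l 1)) := by
        rw [← Nat.card_congr (Equiv.sigmaFiberEquiv g)]
        exact nat_card_sigma_const _ _ fib
      -- transfer midS to submodules of W 1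
      have emid : {Q' : Submodule F ↥(W 1) // finrank F Q' = l 1 ∧
          ∀ i, 1 ≤ i → i < t → finrank F ↥(Q' ⊓ (W (i+1)).comap (W 1).subtype) = l (i+1)} ≃ midS :=
      { toFun := fun Q' => ⟨Q'.1.map (W 1).subtype, map_subtype_le _ _,
          by rw [Submodule.finrank_map_subtype_eq]; exact Q'.2.1,
          fun i h2 hi => by
            have key : (Q'.1.map (W 1).subtype) ⊓ W i =
                (Q'.1 ⊓ (W i).comap (W 1).subtype).map (W 1).subtype := by
              rw [Submodule.map_inf _ (Submodule.injective_subtype (W 1)),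
                Submodule.map_comap_subtype, ← inf_assoc,
                inf_eq_left.mpr (map_subtype_le _ Q'.1)]
            rw [key, Submodule.finrank_map_subtype_eq]
            have := Q'.2.2 (i-1) (by omega) (by omega)
            rw [show i - 1 + 1 = i by omega] at this
            exact this⟩
        invFun := fun R => ⟨R.1.comap (W 1).subtype,
          by
            rw [← Submodule.finrank_map_subtype_eq, Submodule.map_comap_subtype,
              inf_of_le_right R.2.1]
            exact R.2.2.1,
          fun i h1 hi => by
            have key : (R.1.comap (W 1).subtype ⊓ (W (i+1)).comap (W 1).subtype).map
                (W 1).subtype = R.1 ⊓ W (i+1) := by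
              rw [Submodule.map_inf _ (Submodule.injective_subtype (W 1)),
                Submodule.map_comap_subtype, Submodule.map_comap_subtype,
                inf_of_le_right R.2.1, ← inf_assoc, inf_of_le_left R.2.1]
            rw [← Submodule.finrank_map_subtype_eq, key]
            exact R.2.2.2 (i+1) (by omega) (by omega)⟩
        left_inv := fun Q' => by
          apply Subtype.ext
          show (Q'.1.map (W 1).subtype).comap (W 1).subtype = Q'.1
          rw [Submodule.comap_map_eq, Submodule.ker_subtype, sup_bot_eq]
        right_inv := fun R => by
          apply Subtype.ext
          show (R.1.comap (W 1).subtype).map (W 1).subtype = R.1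
          rw [Submodule.map_comap_subtype, inf_of_le_right R.2.1] }
      have hmid := Nat.card_congr emid
      -- apply induction hypothesis
      have hihres := ih ↥(W 1) (fun i => (W (i+1)).comap (W 1).subtype)
        (fun i => k (i+1)) (fun i => l (i+1)) ht1
        (hk1)
        (fun i h1 hi => by
          rw [← Submodule.finrank_map_subtype_eq, Submodule.map_comap_subtype,
            inf_of_le_right (hWle1 (i+1) (by omega) (by omega))]
          exact hW (i+1) (by omega) (by omega))
        (fun i h1 hi => Submodule.comap_mono (hchain (i+1) (by omega) (by omega)))
        (fun i hi => hineq (i+1) (by omega))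
        (by
          have h2 : t - 1 + 1 = t := by omega
          simpa [h2] using hlast)
      simp only [zero_add] at hihres
      rw [hmid] at hihres
      have h2 : t - 1 + 1 = t := by omega
      rw [hsig, hihres, h2]
      simp only [Nat.add_sub_cancel]
      conv_rhs => rw [show t = t - 1 + 1 by omega, Finset.prod_range_succ']
      rw [h2]
      simp only [zero_add]
      ring
end Count

lemma lastSpan_anti (F : Type) [Field F] (N : ℕ) {c c' : ℕ} (h : c ≤ c') :
    lastSpan F N c' ≤ lastSpan F N c := by
  apply Submodule.span_mono
  rintro v ⟨j, hj, rfl⟩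
  exact ⟨j, le_trans h hj, rfl⟩

/-- The number of subspaces of type `(l 0, …, l (t-1))` contained in a fixed subspace `P`
of type `(k 0, …, k (t-1))`. -/
theorem stmt9 {F : Type} [Field F] [Fintype F] (q t : ℕ) (ht : 1 ≤ t) (n k l : ℕ → ℕ)
    (hq : Fintype.card F = q)
    (h : ∀ i < t - 1, l (i + 1) ≤ l i ∧ l i - l (i + 1) ≤ k i - k (i + 1) ∧
      k (i + 1) ≤ k i ∧ k i - k (i + 1) ≤ n i)
    (hlast : l (t - 1) ≤ k (t - 1) ∧ k (t - 1) ≤ n (t - 1))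
    (P : Submodule F (Fin (∑ m ∈ Finset.range t, n m) → F)) (hP : IsTypeP F t n k P) :
    Nat.card {Q : Submodule F (Fin (∑ m ∈ Finset.range t, n m) → F) //
        IsTypeP F t n l Q ∧ Q ≤ P} =
      gaussBinom q (k (t - 1)) (l (t - 1)) *
        ∏ j ∈ Finset.range (t - 1),
          q ^ ((l j - l (j + 1)) * (k (j + 1) - l (j + 1))) *
            gaussBinom q (k j - k (j + 1)) (l j - l (j + 1)) := by
  classical
  subst hq
  have e : {Q' : Submodule F ↥P // finrank F Q' = l 0 ∧
      ∀ i, 1 ≤ i → i < t → finrank F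
        ↥(Q' ⊓ (lastSpan F (∑ m ∈ Finset.range t, n m)
          (∑ j ∈ Finset.range i, n j)).comap P.subtype) = l i} ≃
      {Q : Submodule F (Fin (∑ m ∈ Finset.range t, n m) → F) //
        IsTypeP F t n l Q ∧ Q ≤ P} :=
  { toFun := fun Q' => ⟨Q'.1.map P.subtype,
      ⟨by rw [Submodule.finrank_map_subtype_eq]; exact Q'.2.1,
       fun i h1 hi => by
        have key : (Q'.1.map P.subtype) ⊓ lastSpan F (∑ m ∈ Finset.range t, n m)
              (∑ j ∈ Finset.range i, n j) =
            (Q'.1 ⊓ (lastSpan F (∑ m ∈ Finset.range t, n m)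
              (∑ j ∈ Finset.range i, n j)).comap P.subtype).map P.subtype := by
          rw [Submodule.map_inf _ (Submodule.injective_subtype P),
            Submodule.map_comap_subtype, ← inf_assoc,
            inf_eq_left.mpr (map_subtype_le _ Q'.1)]
        show finrank F ↥(Q'.1.map P.subtype ⊓ lastSpan F (∑ m ∈ Finset.range t, n m)
          (∑ j ∈ Finset.range i, n j)) = l i
        rw [key, Submodule.finrank_map_subtype_eq]
        exact Q'.2.2 i h1 hi⟩,
      map_subtype_le _ _⟩
    invFun := fun Q => ⟨Q.1.comap P.subtype,
      by
        rw [← Submodule.finrank_map_subtype_eq, Submodule.map_comap_subtype,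
          inf_of_le_right Q.2.2]
        exact Q.2.1.1,
      fun i h1 hi => by
        have key : (Q.1.comap P.subtype ⊓ (lastSpan F (∑ m ∈ Finset.range t, n m)
              (∑ j ∈ Finset.range i, n j)).comap P.subtype).map P.subtype =
            Q.1 ⊓ lastSpan F (∑ m ∈ Finset.range t, n m) (∑ j ∈ Finset.range i, n j) := by
          rw [Submodule.map_inf _ (Submodule.injective_subtype P),
            Submodule.map_comap_subtype, Submodule.map_comap_subtype,
            inf_of_le_right Q.2.2, ← inf_assoc, inf_of_le_left Q.2.2]
        rw [← Submodule.finrank_map_subtype_eq, key]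
        exact Q.2.1.2 i h1 hi⟩
    left_inv := fun Q' => by
      apply Subtype.ext
      show (Q'.1.map P.subtype).comap P.subtype = Q'.1
      rw [Submodule.comap_map_eq, Submodule.ker_subtype, sup_bot_eq]
    right_inv := fun Q => by
      apply Subtype.ext
      show (Q.1.comap P.subtype).map P.subtype = Q.1
      rw [Submodule.map_comap_subtype, inf_of_le_right Q.2.2] }
  refine (Nat.card_congr e.symm).trans ?_
  have hWrank : ∀ i, 1 ≤ i → i < t → finrank F
      ↥((lastSpan F (∑ m ∈ Finset.range t, n m)
        (∑ j ∈ Finset.range i, n j)).comap P.subtype) = k i := by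
    intro i h1 hi
    rw [← Submodule.finrank_map_subtype_eq, Submodule.map_comap_subtype]
    exact hP.2 i h1 hi
  have hchain : ∀ i, 1 ≤ i → i + 1 < t →
      (lastSpan F (∑ m ∈ Finset.range t, n m)
        (∑ j ∈ Finset.range (i+1), n j)).comap P.subtype ≤
      (lastSpan F (∑ m ∈ Finset.range t, n m)
        (∑ j ∈ Finset.range i, n j)).comap P.subtype := by
    intro i h1 hi
    apply Submodule.comap_mono
    apply lastSpan_anti
    apply Finset.sum_le_sum_of_subset
    exact Finset.range_subset_range.mpr (by omega)
  exact flag_count t ↥P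
    (fun i => (lastSpan F (∑ m ∈ Finset.range t, n m)
      (∑ j ∈ Finset.range i, n j)).comap P.subtype) k l ht hP.1 hWrank hchain
    (fun i hi => ⟨(h i hi).1, (h i hi).2.1, (h i hi).2.2.1⟩) hlast.1
end

section
/- Given an (m₁+m₂)×(n₁+n₂) block upper-triangular matrix [[A₁₂, C₁₂],[0, B₁₂]] over F_q with rank A₁₂ = a, rank B₁₂ = b, rank (A₁₂ C₁₂) = a + c, and rank of (C₁₂ over B₁₂) = b + c, there exist invertible block-diagonal matrices T = diag(T₁₁, T₂₂) and S = diag(S₁₁, S₂₂) (blocks of sizes m₁, m₂ and n₁, n₂ respectively) such that T · [[A₁₂, C₁₂],[0, B₁₂]] · S has A₁₂-block equal to [[I^{(a)}, 0],[0,0]] and B₁₂-block equal to [[I^{(b)}, 0],[0,0]], and the transformed C-block, partitioned compatibly as [[C₁,C₂],[C₃,C₄]], satisfies rank (C₃ C₄) = rank (C₂ over C₄) = c. -/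
/-- The `m × n` partial identity matrix `[[I^{(a)}, 0], [0, 0]]`. -/
def pIdent (F : Type) [Field F] (m n a : ℕ) : Matrix (Fin m) (Fin n) F :=
  fun r c => if (r : ℕ) = (c : ℕ) ∧ (r : ℕ) < a then 1 else 0

namespace Stmt18Aux

open Matrix Module

variable {F : Type} [Field F]

lemma pIdent_transpose (m n a : ℕ) : (pIdent F m n a)ᵀ = pIdent F n m a := by
  ext i j
  simp only [Matrix.transpose_apply, pIdent]
  by_cases h : (j : ℕ) = (i : ℕ)
  · simp [h]
  · rw [if_neg (by tauto), if_neg (by omega)]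

lemma pIdent_mul_pIdent {m k n a : ℕ} (hak : a ≤ k) :
    pIdent F m k a * pIdent F k n a = pIdent F m n a := by
  ext i j
  simp only [Matrix.mul_apply, pIdent]
  by_cases hia : (i : ℕ) < a
  · have hik : (i : ℕ) < k := lt_of_lt_of_le hia hak
    rw [Finset.sum_eq_single (⟨(i : ℕ), hik⟩ : Fin k)]
    · simp [hia]
    · intro l _ hl
      have : ¬((i : ℕ) = (l : ℕ) ∧ (i : ℕ) < a) := by
        rintro ⟨h1, -⟩
        exact hl (Fin.ext h1.symm)
      simp [this]
    · simp
  · rw [Finset.sum_eq_zero, if_neg (by tauto)]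
    intro l _
    simp [hia]

lemma pIdent_self (a : ℕ) : pIdent F a a a = (1 : Matrix (Fin a) (Fin a) F) := by
  ext i j
  simp [pIdent, Matrix.one_apply, Fin.ext_iff, i.isLt]

lemma rank_pIdent (m n a : ℕ) (ham : a ≤ m) (han : a ≤ n) : (pIdent F m n a).rank = a := by
  apply le_antisymm
  · calc (pIdent F m n a).rank = (pIdent F m a a * pIdent F a n a).rank := by
          rw [pIdent_mul_pIdent le_rfl]
      _ ≤ (pIdent F m a a).rank := Matrix.rank_mul_le_left _ _
      _ ≤ a := by simpa using (pIdent F m a a).rank_le_card_width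
  · have h1 : pIdent F a m a * (pIdent F m n a * pIdent F n a a) = 1 := by
      rw [pIdent_mul_pIdent han, pIdent_mul_pIdent ham, pIdent_self]
    calc a = (1 : Matrix (Fin a) (Fin a) F).rank := by simp
      _ = (pIdent F a m a * (pIdent F m n a * pIdent F n a a)).rank := by rw [h1]
      _ ≤ (pIdent F m n a * pIdent F n a a).rank := Matrix.rank_mul_le_right _ _
      _ ≤ (pIdent F m n a).rank := Matrix.rank_mul_le_left _ _


lemma range_mulVecLin_fromColumns {m n₁ n₂ : Type*} [Fintype n₁] [Fintype n₂]
    (A : Matrix m n₁ F) (B : Matrix m n₂ F) :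
    LinearMap.range (Matrix.fromCols A B).mulVecLin
      = LinearMap.range A.mulVecLin ⊔ LinearMap.range B.mulVecLin := by
  apply le_antisymm
  · rintro x ⟨v, rfl⟩
    rw [Matrix.mulVecLin_apply, ← Sum.elim_comp_inl_inr v, Matrix.fromCols_mulVec_sumElim]
    exact Submodule.add_mem_sup ⟨_, rfl⟩ ⟨_, rfl⟩
  · apply sup_le
    · rintro x ⟨v, rfl⟩
      exact ⟨Sum.elim v 0, by
        simp [Matrix.mulVecLin_apply, Matrix.fromCols_mulVec_sumElim]⟩
    · rintro x ⟨v, rfl⟩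
      exact ⟨Sum.elim 0 v, by
        simp [Matrix.mulVecLin_apply, Matrix.fromCols_mulVec_sumElim]⟩

/-- Core computation: if `D` has zero first `a` rows then the rank of the span-sup with the
partial identity adds up. -/
lemma finrank_sup_pIdent (m n₁ n₂ a : ℕ) (ham : a ≤ m) (han : a ≤ n₁)
    (D : Matrix (Fin m) (Fin n₂) F) (hD : ∀ (i : Fin m) (j : Fin n₂), (i : ℕ) < a → D i j = 0) :
    finrank F ↥((LinearMap.range (pIdent F m n₁ a).mulVecLin) ⊔ LinearMap.range D.mulVecLin)
      = a + D.rank := by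
  have hdisj : Disjoint (LinearMap.range (pIdent F m n₁ a).mulVecLin)
      (LinearMap.range D.mulVecLin) := by
    rw [Submodule.disjoint_def]
    rintro x ⟨v, rfl⟩ ⟨w, hw⟩
    have hP : ∀ i : Fin m, ¬ (i : ℕ) < a → (pIdent F m n₁ a).mulVecLin v i = 0 := by
      intro i hi
      simp only [Matrix.mulVecLin_apply, Matrix.mulVec, dotProduct, pIdent]
      exact Finset.sum_eq_zero fun j _ => by simp [hi]
    funext i
    show (pIdent F m n₁ a).mulVecLin v i = 0
    by_cases hia : (i : ℕ) < a
    · rw [← hw]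
      simp only [Matrix.mulVecLin_apply, Matrix.mulVec, dotProduct]
      exact Finset.sum_eq_zero fun j _ => by simp [hD i j hia]
    · exact hP i hia
  have hsum := Submodule.finrank_sup_add_finrank_inf_eq
      (LinearMap.range (pIdent F m n₁ a).mulVecLin) (LinearMap.range D.mulVecLin)
  rw [disjoint_iff.mp hdisj, finrank_bot, add_zero] at hsum
  rw [hsum]
  congr 1
  exact rank_pIdent m n₁ a ham han

lemma rank_fromColumns_pIdent_left (m n₁ n₂ a : ℕ) (ham : a ≤ m) (han : a ≤ n₁)
    (D : Matrix (Fin m) (Fin n₂) F) (hD : ∀ (i : Fin m) (j : Fin n₂), (i : ℕ) < a → D i j = 0) :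
    (Matrix.fromCols (pIdent F m n₁ a) D).rank = a + D.rank := by
  show finrank F _ = _
  rw [range_mulVecLin_fromColumns]
  exact finrank_sup_pIdent m n₁ n₂ a ham han D hD

lemma rank_fromColumns_pIdent_right (m n₁ n₂ a : ℕ) (ham : a ≤ m) (han : a ≤ n₁)
    (D : Matrix (Fin m) (Fin n₂) F) (hD : ∀ (i : Fin m) (j : Fin n₂), (i : ℕ) < a → D i j = 0) :
    (Matrix.fromCols D (pIdent F m n₁ a)).rank = a + D.rank := by
  show finrank F _ = _
  rw [range_mulVecLin_fromColumns, sup_comm]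
  exact finrank_sup_pIdent m n₁ n₂ a ham han D hD


/-- `D` is `C` with the first `a` rows zeroed out. -/
private def Dmat (m n₂ a : ℕ) (C : Matrix (Fin m) (Fin n₂) F) : Matrix (Fin m) (Fin n₂) F :=
  C - pIdent F m m a * C

lemma Dmat_apply (m n₂ a : ℕ) (C : Matrix (Fin m) (Fin n₂) F) (i : Fin m) (j : Fin n₂) :
    Dmat m n₂ a C i j = if (i : ℕ) < a then 0 else C i j := by
  simp only [Dmat, Matrix.sub_apply, Matrix.mul_apply, pIdent]
  by_cases hia : (i : ℕ) < a
  · rw [Finset.sum_eq_single i]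
    · simp [hia]
    · intro l _ hl
      rw [if_neg, zero_mul]
      rintro ⟨h1, -⟩
      exact hl (Fin.ext h1.symm)
    · simp
  · rw [Finset.sum_eq_zero, if_neg hia, sub_zero]
    intro l _
    rw [if_neg (by tauto), zero_mul]

lemma Dmat_rank (m n₂ a : ℕ) (C : Matrix (Fin m) (Fin n₂) F) :
    (Dmat m n₂ a C).rank
      = (C.submatrix (fun r : Fin (m - a) => (⟨a + r.1, by omega⟩ : Fin m)) id).rank := by
  set Cb := C.submatrix (fun r : Fin (m - a) => (⟨a + r.1, by omega⟩ : Fin m)) id with hCb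
  apply le_antisymm
  · have hfac : Dmat m n₂ a C
        = (Matrix.of fun (i : Fin m) (r : Fin (m - a)) =>
            if (i : ℕ) = a + r.1 then (1 : F) else 0) * Cb := by
      ext i j
      rw [Matrix.mul_apply, Dmat_apply]
      by_cases hia : (i : ℕ) < a
      · rw [if_pos hia, eq_comm]
        exact Finset.sum_eq_zero fun r _ => by
          rw [Matrix.of_apply, if_neg (by omega), zero_mul]
      · rw [if_neg hia]
        have hr : (i : ℕ) - a < m - a := by omega
        rw [Finset.sum_eq_single (⟨(i : ℕ) - a, hr⟩ : Fin (m - a))]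
        · rw [Matrix.of_apply, if_pos (by simp; omega), one_mul, hCb]
          simp only [Matrix.submatrix_apply, id_eq]
          congr 1
          exact Fin.ext (by simp; omega)
        · intro r _ hrne
          rw [Matrix.of_apply, if_neg, zero_mul]
          intro h
          exact hrne (Fin.ext (by simp; omega))
        · simp
    rw [hfac]
    exact Matrix.rank_mul_le_right _ _
  · have hfac : Cb = (Matrix.of fun (r : Fin (m - a)) (i : Fin m) =>
        if (i : ℕ) = a + r.1 then (1 : F) else 0) * Dmat m n₂ a C := by
      ext r j
      rw [Matrix.mul_apply]
      rw [Finset.sum_eq_single (⟨a + r.1, by omega⟩ : Fin m)]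
      · rw [Matrix.of_apply, if_pos (by simp), one_mul, Dmat_apply, if_neg (by simp)]
        simp [hCb]
      · intro i _ hine
        rw [Matrix.of_apply, if_neg, zero_mul]
        intro h
        exact hine (Fin.ext (by simpa using h))
      · simp
    rw [hfac]
    exact Matrix.rank_mul_le_right _ _

lemma rank_fromColumns_pIdent (m n₁ n₂ a : ℕ) (ham : a ≤ m) (C : Matrix (Fin m) (Fin n₂) F) (han : a ≤ n₁) :
    (Matrix.fromCols (pIdent F m n₁ a) C).rank
      = a + (C.submatrix (fun r : Fin (m - a) => (⟨a + r.1, by omega⟩ : Fin m)) id).rank := by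
  have hunit : IsUnit (Matrix.fromBlocks (1 : Matrix (Fin n₁) (Fin n₁) F)
      (-(pIdent F n₁ m a * C)) 0 1).det := by
    rw [Matrix.det_fromBlocks_zero₂₁]
    simp
  have hcol : Matrix.fromCols (pIdent F m n₁ a) C
        * (Matrix.fromBlocks 1 (-(pIdent F n₁ m a * C)) 0 1 : Matrix (Fin n₁ ⊕ Fin n₂) (Fin n₁ ⊕ Fin n₂) F)
      = Matrix.fromCols (pIdent F m n₁ a) (Dmat m n₂ a C) := by
    have h2 : pIdent F m n₁ a * -(pIdent F n₁ m a * C) + C * (1 : Matrix (Fin n₂) (Fin n₂) F) = Dmat m n₂ a C := by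
      rw [Dmat, Matrix.mul_one, Matrix.mul_neg, ← Matrix.mul_assoc,
        pIdent_mul_pIdent han, neg_add_eq_sub]
    rw [Matrix.fromCols_mul_fromBlocks, h2, Matrix.mul_one, Matrix.mul_zero, add_zero]
  rw [← Matrix.rank_mul_eq_left_of_isUnit_det _ _ hunit, hcol,
    rank_fromColumns_pIdent_left m n₁ n₂ a ham han _
      (fun i j h => by rw [Dmat_apply, if_pos h]),
    Dmat_rank]

lemma rank_fromColumns_pIdent' (m n₁ n₂ a : ℕ) (ham : a ≤ m) (C : Matrix (Fin m) (Fin n₂) F) (han : a ≤ n₁) :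
    (Matrix.fromCols C (pIdent F m n₁ a)).rank
      = a + (C.submatrix (fun r : Fin (m - a) => (⟨a + r.1, by omega⟩ : Fin m)) id).rank := by
  have hunit : IsUnit (Matrix.fromBlocks (1 : Matrix (Fin n₂) (Fin n₂) F)
      0 (-(pIdent F n₁ m a * C)) 1).det := by
    rw [Matrix.det_fromBlocks_zero₁₂]
    simp
  have hcol : Matrix.fromCols C (pIdent F m n₁ a)
        * (Matrix.fromBlocks 1 0 (-(pIdent F n₁ m a * C)) 1 : Matrix (Fin n₂ ⊕ Fin n₁) (Fin n₂ ⊕ Fin n₁) F)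
      = Matrix.fromCols (Dmat m n₂ a C) (pIdent F m n₁ a) := by
    have h2 : C * (1 : Matrix (Fin n₂) (Fin n₂) F) + pIdent F m n₁ a * -(pIdent F n₁ m a * C) = Dmat m n₂ a C := by
      rw [Dmat, Matrix.mul_one, Matrix.mul_neg, ← Matrix.mul_assoc,
        pIdent_mul_pIdent han, ← sub_eq_add_neg]
    rw [Matrix.fromCols_mul_fromBlocks, h2, Matrix.mul_zero, Matrix.mul_one, zero_add]
  rw [← Matrix.rank_mul_eq_left_of_isUnit_det _ _ hunit, hcol,
    rank_fromColumns_pIdent_right m n₁ n₂ a ham han _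
      (fun i j h => by rw [Dmat_apply, if_pos h]),
    Dmat_rank]


lemma rank_fromRows_pIdent (m₁ m n a : ℕ) (ham : a ≤ m) (han : a ≤ n)
    (C : Matrix (Fin m₁) (Fin n) F) :
    (Matrix.fromRows C (pIdent F m n a)).rank
      = a + (C.submatrix id (fun j : Fin (n - a) => (⟨a + j.1, by omega⟩ : Fin n))).rank := by
  rw [← Matrix.rank_transpose, Matrix.transpose_fromRows, pIdent_transpose,
    rank_fromColumns_pIdent' n m m₁ a han Cᵀ ham]
  congr 1
  rw [← Matrix.rank_transpose (C.submatrix id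
    (fun j : Fin (n - a) => (⟨a + j.1, by omega⟩ : Fin n)))]
  congr 1


lemma exists_normal_form (m n a : ℕ) (ham : a ≤ m) (han : a ≤ n)
    (M : Matrix (Fin m) (Fin n) F) (hM : M.rank = a) :
    ∃ (T : Matrix (Fin m) (Fin m) F) (S : Matrix (Fin n) (Fin n) F),
      IsUnit T ∧ IsUnit S ∧ T * M * S = pIdent F m n a := by
  classical
  set f := M.mulVecLin with hf
  have hrange : finrank F (LinearMap.range f) = a := hM
  have hker : finrank F (LinearMap.ker f) = n - a := by
    have h1 := LinearMap.finrank_range_add_finrank_ker f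
    rw [Module.finrank_fin_fun, hrange] at h1
    omega
  obtain ⟨U, hU⟩ := Submodule.exists_isCompl (LinearMap.ker f)
  have hUr : finrank F U = a := by
    have h1 := Submodule.finrank_add_eq_of_isCompl hU
    rw [hker, Module.finrank_fin_fun] at h1
    omega
  obtain ⟨W, hW⟩ := Submodule.exists_isCompl (LinearMap.range f)
  have hWr : finrank F W = m - a := by
    have h1 := Submodule.finrank_add_eq_of_isCompl hW
    rw [hrange, Module.finrank_fin_fun] at h1
    omega
  let bU : Basis (Fin a) F U := Module.finBasisOfFinrankEq F U hUr
  let bK : Basis (Fin (n - a)) F (LinearMap.ker f) := Module.finBasisOfFinrankEq F _ hker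
  let bW : Basis (Fin (m - a)) F W := Module.finBasisOfFinrankEq F W hWr
  let eU : U ≃ₗ[F] LinearMap.range f :=
    (Submodule.quotientEquivOfIsCompl _ U hU).symm.trans f.quotKerEquivRange
  have heU : ∀ u : U, (eU u : Fin m → F) = f u := by
    intro u
    simp only [eU, LinearEquiv.trans_apply, Submodule.quotientEquivOfIsCompl_symm_apply]
    rw [LinearMap.quotKerEquivRange_apply_mk]
  let bR : Basis (Fin a) F (LinearMap.range f) := bU.map eU
  have hmn : a + (n - a) = n := by omega
  have hmm : a + (m - a) = m := by omega
  let eN : Fin a ⊕ Fin (n - a) ≃ Fin n := finSumFinEquiv.trans (finCongr hmn)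
  let eM : Fin a ⊕ Fin (m - a) ≃ Fin m := finSumFinEquiv.trans (finCongr hmm)
  let bDom : Basis (Fin n) F (Fin n → F) :=
    ((bU.prod bK).map (Submodule.prodEquivOfIsCompl U _ hU.symm)).reindex eN
  let bCod : Basis (Fin m) F (Fin m → F) :=
    ((bR.prod bW).map (Submodule.prodEquivOfIsCompl _ W hW)).reindex eM
  have hDom_inl : ∀ j : Fin a, bDom (eN (Sum.inl j)) = (bU j : Fin n → F) := by
    intro j
    simp only [bDom, Module.Basis.reindex_apply, Equiv.symm_apply_apply, Basis.map_apply]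
    rw [Basis.prod_apply]
    simp
  have hDom_inr : ∀ j : Fin (n - a), bDom (eN (Sum.inr j)) = (bK j : Fin n → F) := by
    intro j
    simp only [bDom, Module.Basis.reindex_apply, Equiv.symm_apply_apply, Basis.map_apply]
    rw [Basis.prod_apply]
    simp
  have hCod_inl : ∀ j : Fin a, bCod (eM (Sum.inl j)) = (bR j : Fin m → F) := by
    intro j
    simp only [bCod, Module.Basis.reindex_apply, Equiv.symm_apply_apply, Basis.map_apply]
    rw [Basis.prod_apply]
    simp
  have hkey1 : ∀ j : Fin a, f (bDom (eN (Sum.inl j))) = bCod (eM (Sum.inl j)) := by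
    intro j
    rw [hDom_inl, hCod_inl]
    show f (bU j : Fin n → F) = (bR j : Fin m → F)
    rw [show bR j = eU (bU j) from rfl, heU]
  have hkey2 : ∀ j : Fin (n - a), f (bDom (eN (Sum.inr j))) = 0 := by
    intro j
    rw [hDom_inr]
    exact (bK j).2
  refine ⟨LinearMap.toMatrix' (bCod.equivFun : (Fin m → F) →ₗ[F] Fin m → F),
    LinearMap.toMatrix' (bDom.equivFun.symm : (Fin n → F) →ₗ[F] Fin n → F), ?_, ?_, ?_⟩
  · refine isUnit_iff_exists.mpr
      ⟨LinearMap.toMatrix' (bCod.equivFun.symm : (Fin m → F) →ₗ[F] Fin m → F), ?_, ?_⟩ <;>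
    · rw [← LinearMap.toMatrix'_comp, ← LinearMap.toMatrix'_id (R := F) (n := Fin m)]
      congr 1
      ext x
      simp
  · refine isUnit_iff_exists.mpr
      ⟨LinearMap.toMatrix' (bDom.equivFun : (Fin n → F) →ₗ[F] Fin n → F), ?_, ?_⟩ <;>
    · rw [← LinearMap.toMatrix'_comp, ← LinearMap.toMatrix'_id (R := F) (n := Fin n)]
      congr 1
      ext x
      simp
  · have hTMS : LinearMap.toMatrix' (bCod.equivFun : (Fin m → F) →ₗ[F] Fin m → F) * M *
        LinearMap.toMatrix' (bDom.equivFun.symm : (Fin n → F) →ₗ[F] Fin n → F)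
        = LinearMap.toMatrix' ((bCod.equivFun : (Fin m → F) →ₗ[F] Fin m → F) ∘ₗ
            (f ∘ₗ (bDom.equivFun.symm : (Fin n → F) →ₗ[F] Fin n → F))) := by
      rw [LinearMap.toMatrix'_comp, LinearMap.toMatrix'_comp]
      rw [show LinearMap.toMatrix' f = M by
        rw [hf, ← Matrix.toLin'_apply', LinearMap.toMatrix'_toLin']]
      rw [Matrix.mul_assoc]
    rw [hTMS]
    ext i j
    rw [LinearMap.toMatrix'_apply]
    have hdelta : bDom.equivFun.symm
        (fun j' => if j' = j then 1 else 0) = bDom j := by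
      rw [Basis.equivFun_symm_apply]
      rw [Finset.sum_eq_single j]
      · simp
      · intro l _ hl
        simp [hl]
      · simp
    simp only [LinearMap.coe_comp, Function.comp_apply, LinearEquiv.coe_coe]
    rw [show (Pi.single j (1 : F) : Fin n → F) = (fun j' => (if j' = j then 1 else 0 : F)) by
      ext j'; simp [Pi.single_apply], hdelta]
    obtain ⟨s, rfl⟩ : ∃ s, eN s = j := ⟨eN.symm j, by simp⟩
    cases s with
    | inl j₀ =>
      rw [hkey1 j₀, Basis.equivFun_apply, Basis.repr_self, Finsupp.single_apply]
      have h1 : ((eN (Sum.inl j₀)) : ℕ) = (j₀ : ℕ) := by simp [eN]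
      have h2 : ((eM (Sum.inl j₀)) : ℕ) = (j₀ : ℕ) := by simp [eM]
      have hj₀ : (j₀ : ℕ) < a := j₀.isLt
      simp only [pIdent]
      by_cases hij : (i : ℕ) = (j₀ : ℕ)
      · rw [if_pos (Fin.ext (by omega)), if_pos (by constructor <;> omega)]
      · rw [if_neg (fun h => hij (by rw [← h]; exact h2)),
          if_neg (by rintro ⟨hx, -⟩; rw [h1] at hx; exact hij hx)]
    | inr j₀ =>
      rw [hkey2 j₀, map_zero]
      have hj : ((eN (Sum.inr j₀)) : ℕ) = a + (j₀ : ℕ) := by simp [eN]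
      simp only [pIdent, hj]
      rw [if_neg (by omega), Pi.zero_apply]

end Stmt18Aux

open Matrix Stmt18Aux in
/-- Normal form under block-diagonal equivalence of a block upper-triangular matrix
`[[A₁₂, C₁₂], [0, B₁₂]]` with the stated rank conditions: the diagonal blocks can be put
into the form `[[I, 0], [0, 0]]` while the transformed `C`-block `[[C₁,C₂],[C₃,C₄]]`
satisfies `rank (C₃ C₄) = rank (C₂ over C₄) = c`. -/
theorem stmt18 {F : Type} [Field F] [Fintype F] (m₁ m₂ n₁ n₂ a b c : ℕ)
    (ham : a ≤ m₁) (han : a ≤ n₁) (hbm : b ≤ m₂) (hbn : b ≤ n₂)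
    (A₁₂ : Matrix (Fin m₁) (Fin n₁) F) (C₁₂ : Matrix (Fin m₁) (Fin n₂) F)
    (B₁₂ : Matrix (Fin m₂) (Fin n₂) F)
    (hA : A₁₂.rank = a) (hB : B₁₂.rank = b)
    (hAC : (Matrix.fromCols A₁₂ C₁₂).rank = a + c)
    (hCB : (Matrix.fromRows C₁₂ B₁₂).rank = b + c) :
    ∃ (T₁₁ : Matrix (Fin m₁) (Fin m₁) F) (T₂₂ : Matrix (Fin m₂) (Fin m₂) F)
      (S₁₁ : Matrix (Fin n₁) (Fin n₁) F) (S₂₂ : Matrix (Fin n₂) (Fin n₂) F),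
      IsUnit T₁₁ ∧ IsUnit T₂₂ ∧ IsUnit S₁₁ ∧ IsUnit S₂₂ ∧
      T₁₁ * A₁₂ * S₁₁ = pIdent F m₁ n₁ a ∧
      T₂₂ * B₁₂ * S₂₂ = pIdent F m₂ n₂ b ∧
      ((T₁₁ * C₁₂ * S₂₂).submatrix
          (fun r : Fin (m₁ - a) => (⟨a + r.1, by omega⟩ : Fin m₁)) id).rank = c ∧
      ((T₁₁ * C₁₂ * S₂₂).submatrix id
          (fun j : Fin (n₂ - b) => (⟨b + j.1, by omega⟩ : Fin n₂))).rank = c := by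
  obtain ⟨T₁₁, S₁₁, hT₁₁, hS₁₁, hA'⟩ := exists_normal_form m₁ n₁ a ham han A₁₂ hA
  obtain ⟨T₂₂, S₂₂, hT₂₂, hS₂₂, hB'⟩ := exists_normal_form m₂ n₂ b hbm hbn B₁₂ hB
  refine ⟨T₁₁, T₂₂, S₁₁, S₂₂, hT₁₁, hT₂₂, hS₁₁, hS₂₂, hA', hB', ?_, ?_⟩
  · have e1 : T₁₁ * Matrix.fromCols A₁₂ C₁₂ * (Matrix.fromBlocks S₁₁ 0 0 S₂₂ : Matrix (Fin n₁ ⊕ Fin n₂) (Fin n₁ ⊕ Fin n₂) F)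
        = Matrix.fromCols (pIdent F m₁ n₁ a) (T₁₁ * C₁₂ * S₂₂) := by
      rw [Matrix.mul_fromCols, Matrix.fromCols_mul_fromBlocks,
        Matrix.mul_zero, Matrix.mul_zero, add_zero, zero_add, hA']
    have h1 : (Matrix.fromCols (pIdent F m₁ n₁ a) (T₁₁ * C₁₂ * S₂₂)).rank = a + c := by
      rw [← e1,
        Matrix.rank_mul_eq_left_of_isUnit_det _ _ (by
          rw [Matrix.det_fromBlocks_zero₂₁]
          exact ((Matrix.isUnit_iff_isUnit_det _).mp hS₁₁).mul
            ((Matrix.isUnit_iff_isUnit_det _).mp hS₂₂)),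
        Matrix.rank_mul_eq_right_of_isUnit_det _ _ ((Matrix.isUnit_iff_isUnit_det _).mp hT₁₁),
        hAC]
    have h2 := rank_fromColumns_pIdent m₁ n₁ n₂ a ham (T₁₁ * C₁₂ * S₂₂) han
    rw [h1] at h2
    exact (Nat.add_left_cancel h2).symm
  · have e2 : Matrix.fromBlocks T₁₁ 0 0 T₂₂ * Matrix.fromRows C₁₂ B₁₂ * S₂₂
        = Matrix.fromRows (T₁₁ * C₁₂ * S₂₂) (pIdent F m₂ n₂ b) := by
      rw [Matrix.fromBlocks_mul_fromRows, Matrix.zero_mul, Matrix.zero_mul, add_zero, zero_add,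
        Matrix.fromRows_mul, hB']
    have h1 : (Matrix.fromRows (T₁₁ * C₁₂ * S₂₂) (pIdent F m₂ n₂ b)).rank = b + c := by
      rw [← e2,
        Matrix.rank_mul_eq_left_of_isUnit_det _ _ ((Matrix.isUnit_iff_isUnit_det _).mp hS₂₂),
        Matrix.rank_mul_eq_right_of_isUnit_det _ _ (by
          rw [Matrix.det_fromBlocks_zero₂₁]
          exact ((Matrix.isUnit_iff_isUnit_det _).mp hT₁₁).mul
            ((Matrix.isUnit_iff_isUnit_det _).mp hT₂₂)),
        hCB]
    have h2 := rank_fromRows_pIdent m₁ m₂ n₂ b hbm hbn (T₁₁ * C₁₂ * S₂₂)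
    rw [h1] at h2
    exact (Nat.add_left_cancel h2).symm
end
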